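/- For i, j > 0 and f ∈ NSym: F^⊥_{(i)}(f·e_j) = F^⊥_{(i)}(f)·e_j + F^⊥_{(i−1)}(f)·e_{j−1}, and F^⊥_{(1^i)}(f·e_j) = ∑_{k=0}^{min(i,j)} F^⊥_{(1^{i−k})}(f)·e_{j−k}. In particular F^⊥_{(1^i)}(e_j) equals e_{j−i} if i ≤ j and 0 if i > j, while F^⊥_{(i)}(e_j) equals e_{j−1} if i = 1, e_j if i = 0, and 0 if i > 1. -/

import Mathlib

open scoped Classical

/-- `NSym`, modeled as the monoid algebra on words in the complete homogeneous
generators `h_n` (`n ≥ 1`): the word `(α₁,…,α_k)` is the basis element `h_α`. -/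
abbrev NSymH := MonoidAlgebra ℚ (FreeMonoid ℕ+)

/-- The basis element `h_α` for a list `α` (parts `0` contribute `h₀ = 1`). -/
noncomputable def hW (l : List ℕ) : NSymH :=
  MonoidAlgebra.single
    (FreeMonoid.ofList (l.filterMap fun m => if h : 0 < m then some (⟨m, h⟩ : ℕ+) else none)) 1

/-- The elementary noncommutative symmetric function `e_n = ∑_{α⊨n} (−1)^{n−ℓ(α)} h_α`. -/
noncomputable def eN (n : ℕ) : NSymH :=
  ∑ α : Composition n, ((-1 : ℚ) ^ (n - α.length)) • hW α.blocks

/-- The exponent vector of the monomial `x_0^{w₁} x_1^{w₂} ⋯` attached to a word `w`;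
the coefficient of this monomial in `f ∈ QSym` is `⟨h_w, f⟩`. -/
noncomputable def monomialOfW (w : FreeMonoid ℕ+) : ℕ →₀ ℕ :=
  ∑ j : Fin (FreeMonoid.toList w).length,
    Finsupp.single (j : ℕ) (((FreeMonoid.toList w).get j : ℕ+) : ℕ)

/-- The duality pairing `⟨g, f⟩` of `g ∈ NSym` with a quasisymmetric power series `f`,
determined by `⟨h_α, M_β⟩ = δ_{αβ}` (equivalently `⟨R_α, F_β⟩ = δ_{αβ}`). -/
noncomputable def pairPF (g : NSymH) (f : MvPowerSeries ℕ ℚ) : ℚ :=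
  Finsupp.sum g.coeff fun w c => c * MvPowerSeries.coeff (monomialOfW w) f

/-- `e_α` as a product of the letters of a word. -/
noncomputable def eWord (w : FreeMonoid ℕ+) : NSymH :=
  ((FreeMonoid.toList w).map fun p => eN (p : ℕ)).prod

/-- The involution `ψ` of `NSym`, the linear map with `ψ(h_α) = e_α`
(equivalently `ψ(R_α) = R_{αᶜ}`). -/
noncomputable def psiN : NSymH →ₗ[ℚ] NSymH :=
  (Finsupp.lsum ℚ fun w => LinearMap.toSpanSingleton ℚ NSymH (eWord w)) ∘ₗ
    (MonoidAlgebra.coeffLinearEquiv ℚ).toLinearMap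
/-- The set of partial sums associated to a composition. -/
def compSet {n : ℕ} (α : Composition n) : Finset ℕ :=
  (Finset.Icc 1 (α.length - 1)).image fun k => (α.blocks.take k).sum

/-- The fundamental quasisymmetric function `F_α`. -/
noncomputable def Ffun {n : ℕ} (α : Composition n) : MvPowerSeries ℕ ℚ :=
  fun d => if ∃ i : ℕ → ℕ, (∀ a b, a ≤ b → b < n → i a ≤ i b) ∧
      (∀ j, j + 1 < n → i j = i (j + 1) → (j + 1) ∉ compSet α) ∧
      d = ∑ j ∈ Finset.range n, Finsupp.single (i j) 1 then (1 : ℚ) else 0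

/-- The monomial quasisymmetric function `M_α`. -/
noncomputable def Mfun {n : ℕ} (α : Composition n) : MvPowerSeries ℕ ℚ :=
  fun d => if ∃ f : Fin α.length → ℕ, StrictMono f ∧
      d = ∑ j, Finsupp.single (f j) (α.blocks.get j) then (1 : ℚ) else 0

/-- Encoding of the subset of `{1,…,n-1}` corresponding to a composition. -/
def toFinsetC {n : ℕ} (α : Composition n) : Finset (Fin (n - 1)) :=
  compositionAsSetEquiv n (compositionEquiv n α)

/-- The composition of `n` corresponding to a subset of `{1,…,n-1}`. -/
def ofFinsetC (n : ℕ) (S : Finset (Fin (n - 1))) : Composition n :=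
  (compositionEquiv n).symm ((compositionAsSetEquiv n).symm S)

/-- The complement composition `αᶜ = comp(set(α)ᶜ)`. -/
def complC {n : ℕ} (α : Composition n) : Composition n :=
  ofFinsetC n (toFinsetC α)ᶜ

/-- The fundamental quasisymmetric function `F_{(1^k)}` of the column composition. -/
noncomputable def Fcol (k : ℕ) : MvPowerSeries ℕ ℚ := Ffun (Composition.ones k)

/-- The fundamental quasisymmetric function `F_{(k)}` of the one-row composition
(`F_∅ = 1` for `k = 0`). -/
noncomputable def Frow (k : ℕ) : MvPowerSeries ℕ ℚ :=
  if h : 0 < k then Ffun (Composition.single k h) else 1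

namespace PerpAux

open Finset

/-! ### List partial sums -/

def PSl (l : List ℕ) (x : ℕ) : Prop := ∃ v, (l.take v).sum = x

lemma psl_zero (l : List ℕ) : PSl l 0 := ⟨0, rfl⟩

lemma psl_sum (l : List ℕ) : PSl l l.sum := ⟨l.length, by simp⟩

lemma psl_nil (x : ℕ) : PSl [] x ↔ x = 0 :=
  ⟨fun ⟨v, hv⟩ => by simpa using hv.symm, fun h => h ▸ psl_zero []⟩

lemma psl_cons (b : ℕ) (t : List ℕ) (x : ℕ) :
    PSl (b :: t) x ↔ x = 0 ∨ ∃ y, PSl t y ∧ x = b + y := by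
  constructor
  · rintro ⟨v, hv⟩
    cases v with
    | zero => left; simpa using hv.symm
    | succ v => right; exact ⟨(t.take v).sum, ⟨v, rfl⟩, by simpa using hv.symm⟩
  · rintro (rfl | ⟨y, ⟨v, hv⟩, rfl⟩)
    · exact psl_zero _
    · exact ⟨v + 1, by simp [hv]⟩

lemma takesum_le_sum (l : List ℕ) (k : ℕ) : (l.take k).sum ≤ l.sum := by
  conv_rhs => rw [← List.take_append_drop k l]
  rw [List.sum_append]; omega

lemma takesum_mono (l : List ℕ) {v v' : ℕ} (h : v ≤ v') :
    (l.take v).sum ≤ (l.take v').sum := by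
  calc (l.take v).sum = ((l.take v').take v).sum := by rw [List.take_take, Nat.min_eq_left h]
  _ ≤ (l.take v').sum := takesum_le_sum _ _

lemma takesum_strict (l : List ℕ) (hl : ∀ x ∈ l, 0 < x) :
    ∀ {v v' : ℕ}, v < v' → v ≤ l.length → v < l.length → (l.take v).sum < (l.take v').sum := by
  induction l with
  | nil => intro v v' _ _ hv; simp at hv
  | cons b t ih =>
    intro v v' hvv' _ hv
    cases v with
    | zero =>
      obtain ⟨v'', rfl⟩ : ∃ v'', v' = v'' + 1 := ⟨v' - 1, by omega⟩
      simp only [List.take_zero, List.sum_nil, List.take_succ_cons, List.sum_cons]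
      have := hl b (by simp); omega
    | succ v =>
      obtain ⟨v'', rfl⟩ : ∃ v'', v' = v'' + 1 := ⟨v' - 1, by omega⟩
      simp only [List.take_succ_cons, List.sum_cons]
      simp only [List.length_cons] at hv
      have := ih (fun x hx => hl x (by simp [hx])) (v := v) (v' := v'') (by omega) (by omega)
        (by omega)
      omega

lemma takesum_pos (l : List ℕ) (hl : ∀ x ∈ l, 0 < x) {k : ℕ} (hk : 1 ≤ k) (hne : 0 < l.length) :
    0 < (l.take k).sum := by
  have := takesum_strict l hl (v := 0) (v' := k) hk (by omega) hne
  simpa using this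

lemma takesum_lt (l : List ℕ) (hl : ∀ x ∈ l, 0 < x) {k : ℕ} (hk : k < l.length) :
    (l.take k).sum < l.sum := by
  have := takesum_strict l hl (v := k) (v' := l.length) hk (by omega) hk
  simpa using this

/-- A positive list is determined by its set of partial sums. -/
lemma list_eq_of_psl (l l' : List ℕ) (hl : ∀ x ∈ l, 0 < x) (hl' : ∀ x ∈ l', 0 < x)
    (hsum : l.sum = l'.sum) (hps : ∀ x, PSl l x ↔ PSl l' x) : l = l' := by
  induction l generalizing l' with
  | nil =>
    cases l' with
    | nil => rfl
    | cons b t =>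
      exfalso
      have hb := hl' b (by simp)
      simp only [List.sum_nil, List.sum_cons] at hsum
      have : ∀ x ∈ t, 0 < x := fun x hx => hl' x (by simp [hx])
      have : 0 < b + t.sum := by omega
      omega
  | cons b t ih =>
    cases l' with
    | nil =>
      exfalso
      have hb := hl b (by simp)
      simp only [List.sum_nil, List.sum_cons] at hsum
      omega
    | cons b' t' =>
      have hb := hl b (by simp)
      have hb' := hl' b' (by simp)
      -- b = b'
      have h1 : PSl (b' :: t') b := (hps b).mp ⟨1, by simp⟩
      have h2 : PSl (b :: t) b' := (hps b').mpr ⟨1, by simp⟩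
      rw [psl_cons] at h1 h2
      have hbb : b = b' := by
        rcases h1 with h | ⟨y, _, rfl⟩
        · omega
        · rcases h2 with h | ⟨y', _, h⟩
          · omega
          · omega
      subst hbb
      have hts : t.sum = t'.sum := by
        simp only [List.sum_cons] at hsum; omega
      have htps : ∀ x, PSl t x ↔ PSl t' x := by
        intro x
        have e1 : PSl (b :: t) (b + x) ↔ PSl (b :: t') (b + x) := hps (b + x)
        rw [psl_cons, psl_cons] at e1
        constructor
        · intro hx
          rcases e1.mp (Or.inr ⟨x, hx, rfl⟩) with h | ⟨y, hy, hxy⟩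
          · omega
          · have : x = y := by omega
            exact this ▸ hy
        · intro hx
          rcases e1.mpr (Or.inr ⟨x, hx, rfl⟩) with h | ⟨y, hy, hxy⟩
          · omega
          · have : x = y := by omega
            exact this ▸ hy
      exact congrArg (b :: ·) (ih t' (fun x hx => hl x (by simp [hx]))
        (fun x hx => hl' x (by simp [hx])) hts htps)

/-! ### Finsupp prefix sums and weight -/

def psum (d : ℕ →₀ ℕ) (v : ℕ) : ℕ := ∑ u ∈ Finset.range v, d u

def wt (d : ℕ →₀ ℕ) : ℕ := d.sum fun _ n => n

lemma psum_zero_v (d : ℕ →₀ ℕ) : psum d 0 = 0 := by simp [psum]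

lemma psum_succ (d : ℕ →₀ ℕ) (v : ℕ) : psum d (v + 1) = psum d v + d v :=
  Finset.sum_range_succ _ _

lemma psum_mono (d : ℕ →₀ ℕ) {v v' : ℕ} (h : v ≤ v') : psum d v ≤ psum d v' :=
  Finset.sum_le_sum_of_subset (Finset.range_subset_range.mpr h)

lemma psum_add (d e : ℕ →₀ ℕ) (v : ℕ) : psum (d + e) v = psum d v + psum e v := by
  simp [psum, Finset.sum_add_distrib]

lemma psum_single (a b v : ℕ) : psum (Finsupp.single a b) v = if a < v then b else 0 := by
  simp only [psum, Finsupp.single_apply]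
  rw [Finset.sum_ite_eq]
  simp

lemma wt_add (d e : ℕ →₀ ℕ) : wt (d + e) = wt d + wt e :=
  Finsupp.sum_add_index' (fun _ => rfl) (fun _ _ _ => rfl)

lemma wt_single (a b : ℕ) : wt (Finsupp.single a b) = b :=
  Finsupp.sum_single_index rfl

lemma psum_eq_wt (d : ℕ →₀ ℕ) {v : ℕ} (h : ∀ x ∈ d.support, x < v) : psum d v = wt d := by
  rw [wt, Finsupp.sum, psum]
  exact (Finset.sum_subset (fun x hx => Finset.mem_range.mpr (h x hx))
    (fun x _ hx => Finsupp.notMem_support_iff.mp hx)).symm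

lemma psum_le_wt (d : ℕ →₀ ℕ) (v : ℕ) : psum d v ≤ wt d := by
  have h1 : psum d v ≤ ∑ u ∈ Finset.range v ∪ d.support, d u :=
    Finset.sum_le_sum_of_subset Finset.subset_union_left
  have h2 : ∑ u ∈ Finset.range v ∪ d.support, d u = ∑ u ∈ d.support, d u :=
    (Finset.sum_subset Finset.subset_union_right
      (fun x _ hx => Finsupp.notMem_support_iff.mp hx)).symm
  rw [wt, Finsupp.sum]; omega

lemma wt_eq_zero {d : ℕ →₀ ℕ} : wt d = 0 ↔ d = 0 := by
  constructor
  · intro h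
    ext x
    by_cases hx : x ∈ d.support
    · have := Finset.sum_eq_zero_iff.mp h x hx
      simpa using this
    · simpa using Finsupp.notMem_support_iff.mp hx
  · rintro rfl; simp [wt]

end PerpAux
namespace PerpAux

open Finset

/-! ### words and monomials -/

noncomputable def monoL (l : List ℕ) : ℕ →₀ ℕ :=
  ∑ j : Fin l.length, Finsupp.single (j : ℕ) (l.get j)

lemma monoL_apply (l : List ℕ) (v : ℕ) : monoL l v = l.getD v 0 := by
  rw [monoL, Finsupp.finset_sum_apply]
  by_cases hv : v < l.length
  · rw [Finset.sum_eq_single (⟨v, hv⟩ : Fin l.length)]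
    · rw [Finsupp.single_apply, if_pos rfl, List.getD_eq_getElem _ _ hv]
      simp
    · intro j _ hj
      rw [Finsupp.single_apply, if_neg]
      intro h; exact hj (Fin.ext h)
    · simp
  · rw [Finset.sum_eq_zero, List.getD_eq_default _ _ (by omega)]
    intro j _
    rw [Finsupp.single_apply, if_neg]
    omega

lemma monoL_support (l : List ℕ) : ∀ x ∈ (monoL l).support, x < l.length := by
  intro x hx
  by_contra h
  rw [Finsupp.mem_support_iff, monoL_apply, List.getD_eq_default _ _ (by omega)] at hx
  exact hx rfl

lemma psum_monoL (l : List ℕ) (v : ℕ) : psum (monoL l) v = (l.take v).sum := by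
  induction v with
  | zero => simp [psum_zero_v]
  | succ v ih =>
    rw [psum_succ, ih, monoL_apply]
    by_cases hv : v < l.length
    · rw [List.sum_take_succ _ _ hv, List.getD_eq_getElem _ _ hv]
    · rw [List.getD_eq_default _ _ (by omega), List.take_of_length_le (by omega),
        List.take_of_length_le (by omega)]
      omega

lemma wt_monoL (l : List ℕ) : wt (monoL l) = l.sum := by
  rw [← psum_eq_wt (monoL l) (monoL_support l), psum_monoL, List.take_length]

lemma monoL_append_single (l : List ℕ) (p : ℕ) :
    monoL (l ++ [p]) = monoL l + Finsupp.single l.length p := by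
  ext v
  rw [Finsupp.add_apply, monoL_apply, monoL_apply, Finsupp.single_apply]
  rcases lt_trichotomy v l.length with h | h | h
  · rw [if_neg (by omega), List.getD_append _ _ _ _ h]
    omega
  · subst h
    rw [if_pos rfl, List.getD_append_right _ _ _ _ le_rfl]
    rw [List.getD_eq_default l 0 le_rfl]
    simp
  · rw [if_neg (by omega)]
    rw [List.getD_eq_default (l ++ [p]) 0 (by rw [List.length_append]; simp; omega)]
    rw [List.getD_eq_default l 0 (by omega)]
    omega

noncomputable def wordL (l : List ℕ) : FreeMonoid ℕ+ :=
  FreeMonoid.ofList (l.filterMap fun m => if h : 0 < m then some (⟨m, h⟩ : ℕ+) else none)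

def lst (w : FreeMonoid ℕ+) : List ℕ := (FreeMonoid.toList w).map fun p : ℕ+ => (p : ℕ)

lemma hW_eq (l : List ℕ) : hW l = MonoidAlgebra.single (wordL l) 1 := rfl

lemma filterMap_pos_map (l : List ℕ) (h : ∀ x ∈ l, 0 < x) :
    (l.filterMap fun m => if h : 0 < m then some (⟨m, h⟩ : ℕ+) else none).map
      (fun p : ℕ+ => (p : ℕ)) = l := by
  induction l with
  | nil => rfl
  | cons b t ih =>
    have hb : 0 < b := h b (by simp)
    rw [List.filterMap_cons, dif_pos hb]
    exact congrArg (b :: ·) (ih (fun x hx => h x (by simp [hx])))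

lemma lst_wordL (l : List ℕ) (h : ∀ x ∈ l, 0 < x) : lst (wordL l) = l := by
  unfold lst wordL
  rw [FreeMonoid.toList_ofList]
  exact filterMap_pos_map l h

lemma lst_mul (w u : FreeMonoid ℕ+) : lst (w * u) = lst w ++ lst u := by
  unfold lst
  rw [FreeMonoid.toList_mul, List.map_append]

lemma lst_pos (w : FreeMonoid ℕ+) : ∀ x ∈ lst w, 0 < x := by
  intro x hx
  unfold lst at hx
  rw [List.mem_map] at hx
  obtain ⟨p, _, rfl⟩ := hx
  exact p.2

lemma lst_injective {w w' : FreeMonoid ℕ+} (h : lst w = lst w') : w = w' := by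
  unfold lst at h
  have := List.map_injective_iff.mpr
    (fun a b hab => PNat.coe_injective hab : Function.Injective (fun p : ℕ+ => (p : ℕ))) h
  exact FreeMonoid.toList.injective this

lemma lst_length (w : FreeMonoid ℕ+) : (lst w).length = (FreeMonoid.toList w).length := by
  unfold lst
  exact List.length_map _

lemma lst_getD (w : FreeMonoid ℕ+) (v : ℕ) (h : v < (FreeMonoid.toList w).length) :
    (lst w).getD v 0 = ((FreeMonoid.toList w).get ⟨v, h⟩ : ℕ+) := by
  unfold lst
  rw [List.getD_eq_getElem _ _ (by rw [List.length_map]; exact h)]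
  rw [List.getElem_map]
  simp [List.get_eq_getElem]

lemma monomialOfW_eq (w : FreeMonoid ℕ+) : monomialOfW w = monoL (lst w) := by
  ext v
  rw [monoL_apply, monomialOfW, Finsupp.finset_sum_apply]
  by_cases hv : v < (FreeMonoid.toList w).length
  · rw [Finset.sum_eq_single (⟨v, hv⟩ : Fin (FreeMonoid.toList w).length)]
    · rw [Finsupp.single_apply, if_pos rfl, lst_getD w v hv]
    · intro j _ hj
      rw [Finsupp.single_apply, if_neg]
      intro h; exact hj (Fin.ext h)
    · simp
  · rw [Finset.sum_eq_zero, List.getD_eq_default _ _ (by rw [lst_length]; omega)]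
    intro j _
    rw [Finsupp.single_apply, if_neg]
    omega

lemma wordL_nil : wordL [] = 1 := rfl

lemma wordL_zero : wordL [0] = 1 := rfl

lemma hW_append (l l' : List ℕ) : hW (l ++ l') = hW l * hW l' := by
  rw [hW_eq, hW_eq, hW_eq, MonoidAlgebra.single_mul_single, one_mul, wordL, wordL, wordL,
    List.filterMap_append, FreeMonoid.ofList_append]

lemma hW_nil : hW [] = 1 := by
  rw [hW_eq, wordL_nil, MonoidAlgebra.one_def]

lemma hW_zero : hW [0] = 1 := by
  rw [hW_eq, wordL_zero, MonoidAlgebra.one_def]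

lemma monomialOfW_mul_single (w : FreeMonoid ℕ+) (k : ℕ) :
    monomialOfW (w * wordL [k]) = monoL (lst w) + Finsupp.single (lst w).length k := by
  cases k with
  | zero => rw [wordL_zero, mul_one, monomialOfW_eq]; simp
  | succ k =>
    rw [monomialOfW_eq, lst_mul, lst_wordL [k+1] (by simp), monoL_append_single]

end PerpAux
namespace PerpAux

open Finset

/-! ### compSet basics -/

lemma mem_compSet {m : ℕ} (γ : Composition m) (x : ℕ) :
    x ∈ compSet γ ↔ ∃ k, 1 ≤ k ∧ k ≤ γ.length - 1 ∧ (γ.blocks.take k).sum = x := by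
  simp only [compSet, Finset.mem_image, Finset.mem_Icc]
  constructor
  · rintro ⟨k, ⟨h1, h2⟩, h3⟩; exact ⟨k, h1, h2, h3⟩
  · rintro ⟨k, h1, h2, h3⟩; exact ⟨k, ⟨h1, h2⟩, h3⟩

lemma compSet_bounds {m : ℕ} (γ : Composition m) {x : ℕ} (hx : x ∈ compSet γ) :
    0 < x ∧ x < m := by
  rw [mem_compSet] at hx
  obtain ⟨k, h1, h2, h3⟩ := hx
  have hlen : γ.blocks.length = γ.length := γ.blocks_length
  have hl1 : 1 ≤ γ.length := by
    by_contra h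
    omega
  constructor
  · rw [← h3]
    exact takesum_pos _ (fun x hx => γ.blocks_pos hx) h1 (by omega)
  · have h4 : (γ.blocks.take k).sum < γ.blocks.sum :=
      takesum_lt _ (fun x hx => γ.blocks_pos hx) (by omega)
    rw [γ.blocks_sum] at h4
    omega

lemma psl_blocks_iff {m : ℕ} (γ : Composition m) (x : ℕ) :
    PSl γ.blocks x ↔ x = 0 ∨ x = m ∨ x ∈ compSet γ := by
  have hlen : γ.blocks.length = γ.length := γ.blocks_length
  constructor
  · rintro ⟨v, hv⟩
    rcases Nat.eq_zero_or_pos v with rfl | hv1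
    · left; simpa using hv.symm
    rcases le_or_gt γ.length v with h | h
    · right; left
      rw [List.take_of_length_le (by omega), γ.blocks_sum] at hv
      omega
    · right; right
      rw [mem_compSet]
      exact ⟨v, hv1, by omega, hv⟩
  · rintro (rfl | rfl | hx)
    · exact psl_zero _
    · have := psl_sum γ.blocks
      rw [γ.blocks_sum] at this
      exact this
    · rw [mem_compSet] at hx
      obtain ⟨k, _, _, h3⟩ := hx
      exact ⟨k, h3⟩

/-! ### the coefficient formula for Ffun -/

def OKc {m : ℕ} (γ : Composition m) (d : ℕ →₀ ℕ) : Prop :=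
  wt d = m ∧ ∀ x ∈ compSet γ, ∃ v, psum d v = x

lemma wt_zero : wt 0 = 0 := by simp [wt]

lemma wt_sum {α : Type*} (s : Finset α) (f : α → ℕ →₀ ℕ) :
    wt (∑ j ∈ s, f j) = ∑ j ∈ s, wt (f j) := by
  classical
  induction s using Finset.induction with
  | empty => simp [wt_zero]
  | insert _ _ h ih => rw [Finset.sum_insert h, Finset.sum_insert h, wt_add, ih]

lemma eq_range_card {S : Finset ℕ} (h : ∀ j' j, j' ≤ j → j ∈ S → j' ∈ S) :
    S = Finset.range S.card := by
  ext j
  simp only [Finset.mem_range]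
  constructor
  · intro hj
    have hsub : Finset.range (j + 1) ⊆ S := fun j' hj' =>
      h j' j (by simp only [Finset.mem_range] at hj'; omega) hj
    have := Finset.card_le_card hsub
    simp only [Finset.card_range] at this
    omega
  · intro hj
    by_contra hjS
    have hsub : S ⊆ Finset.range j := by
      intro x hx
      simp only [Finset.mem_range]
      by_contra hx'
      exact hjS (h j x (by omega) hx)
    have := Finset.card_le_card hsub
    simp only [Finset.card_range] at this
    omega

/-- canonical weakly increasing word with prescribed content -/
noncomputable def cI (d : ℕ →₀ ℕ) (j : ℕ) : ℕ := sInf {v | j < psum d (v + 1)}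

lemma cI_set_nonempty (d : ℕ →₀ ℕ) {j : ℕ} (hj : j < wt d) :
    {v | j < psum d (v + 1)}.Nonempty := by
  refine ⟨d.support.sup id, ?_⟩
  have : psum d (d.support.sup id + 1) = wt d := by
    apply psum_eq_wt
    intro x hx
    have := Finset.le_sup (f := id) hx
    simp only [id] at this
    omega
  simp only [Set.mem_setOf_eq, this]
  exact hj

lemma cI_mem (d : ℕ →₀ ℕ) {j : ℕ} (hj : j < wt d) : j < psum d (cI d j + 1) :=
  Nat.sInf_mem (cI_set_nonempty d hj)

lemma cI_le (d : ℕ →₀ ℕ) {j v : ℕ} (h : j < psum d (v + 1)) : cI d j ≤ v :=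
  Nat.sInf_le h

lemma cI_charact (d : ℕ →₀ ℕ) {j : ℕ} (hj : j < wt d) (v : ℕ) :
    cI d j = v ↔ psum d v ≤ j ∧ j < psum d (v + 1) := by
  constructor
  · rintro rfl
    refine ⟨?_, cI_mem d hj⟩
    rcases Nat.eq_zero_or_pos (cI d j) with h0 | h0
    · rw [h0, psum_zero_v]; omega
    · by_contra h
      have heq : cI d j - 1 + 1 = cI d j := by omega
      have : cI d j ≤ cI d j - 1 := cI_le d (by rw [heq]; omega)
      omega
  · rintro ⟨h1, h2⟩
    have hle : cI d j ≤ v := cI_le d h2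
    have hge : v ≤ cI d j := by
      by_contra h
      have : psum d (cI d j + 1) ≤ psum d v := psum_mono d (by omega)
      have := cI_mem d hj
      omega
    omega

lemma cI_mono (d : ℕ →₀ ℕ) {a b : ℕ} (hab : a ≤ b) (hb : b < wt d) : cI d a ≤ cI d b :=
  cI_le d (lt_of_le_of_lt hab (cI_mem d hb))

lemma coeff_Ffun {m : ℕ} (γ : Composition m) (d : ℕ →₀ ℕ) :
    MvPowerSeries.coeff d (Ffun γ) = if OKc γ d then 1 else 0 := by
  rw [MvPowerSeries.coeff_apply]
  show (if _ then (1:ℚ) else 0) = _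
  refine if_congr ?_ rfl rfl
  constructor
  · rintro ⟨i, hmono, hdesc, rfl⟩
    have hwt : wt (∑ j ∈ Finset.range m, Finsupp.single (i j) 1) = m := by
      rw [wt_sum]
      simp [wt_single]
    set d := ∑ j ∈ Finset.range m, Finsupp.single (i j) 1 with hd
    have happ : ∀ u, d u = ((Finset.range m).filter (fun j => i j = u)).card := by
      intro u
      rw [hd, Finsupp.finset_sum_apply, Finset.card_filter]
      apply Finset.sum_congr rfl
      intro j _
      rw [Finsupp.single_apply]
    have hcard : ∀ v, ((Finset.range m).filter (fun j => i j < v)).card = psum d v := by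
      intro v
      rw [Finset.card_filter, psum]
      have hh : ∀ u ∈ Finset.range v, d u = ∑ j ∈ Finset.range m, if i j = u then 1 else 0 := by
        intro u _
        rw [happ, Finset.card_filter]
      rw [Finset.sum_congr rfl hh, Finset.sum_comm]
      apply Finset.sum_congr rfl
      intro j _
      rw [Finset.sum_ite_eq (Finset.range v) (i j) (fun _ => 1)]
      simp [Finset.mem_range]
    have hdc : ∀ v, (Finset.range m).filter (fun j => i j < v) = Finset.range (psum d v) := by
      intro v
      rw [← hcard v]
      apply eq_range_card
      intro j' j hj' hj
      simp only [Finset.mem_filter, Finset.mem_range] at hj ⊢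
      exact ⟨by omega, lt_of_le_of_lt (hmono j' j hj' hj.1) hj.2⟩
    have keyIff : ∀ v j, j < m → (i j < v ↔ j < psum d v) := by
      intro v j hj
      have h1 : j ∈ (Finset.range m).filter (fun j => i j < v) ↔
          j ∈ Finset.range (psum d v) := by rw [hdc]
      simp only [Finset.mem_filter, Finset.mem_range] at h1
      constructor
      · intro h; exact (h1.mp ⟨hj, h⟩)
      · intro h; exact (h1.mpr h).2
    refine ⟨hwt, ?_⟩
    intro x hx
    obtain ⟨hx0, hxm⟩ := compSet_bounds γ hx
    have hne : i (x - 1) ≠ i x := by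
      intro heq
      have hd2 := hdesc (x - 1) (by omega)
      rw [show x - 1 + 1 = x by omega] at hd2
      exact hd2 heq hx
    have hlt : i (x - 1) < i x :=
      lt_of_le_of_ne (hmono (x - 1) x (by omega) (by omega)) hne
    refine ⟨i x, ?_⟩
    have h1 := (keyIff (i x) (x - 1) (by omega)).mp hlt
    have h3 : ¬ i x < i x := lt_irrefl _
    have h4 : ¬ x < psum d (i x) := fun hc => h3 ((keyIff (i x) x (by omega)).mpr hc)
    omega
  · rintro ⟨hwt, hps⟩
    refine ⟨cI d, ?_, ?_, ?_⟩
    · intro a b hab hb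
      exact cI_mono d hab (by omega)
    · intro j hj heq hmem
      obtain ⟨v, hv⟩ := hps (j + 1) hmem
      have hv0 : v ≠ 0 := by
        intro h
        rw [h, psum_zero_v] at hv
        omega
      obtain ⟨v', rfl⟩ : ∃ v', v = v' + 1 := ⟨v - 1, by omega⟩
      have h1 : cI d j ≤ v' := cI_le d (by omega)
      have h2 : v' < cI d (j + 1) := by
        by_contra h
        have h3 : psum d (cI d (j + 1) + 1) ≤ psum d (v' + 1) := psum_mono d (by omega)
        have h4 := cI_mem d (j := j + 1) (by omega)
        omega
      omega
    · ext u
      rw [Finsupp.finset_sum_apply]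
      have hh : ∀ j ∈ Finset.range m, Finsupp.single (cI d j) 1 u
          = if cI d j = u then 1 else 0 := by
        intro j _
        rw [Finsupp.single_apply]
      rw [Finset.sum_congr rfl hh, ← Finset.card_filter]
      have hfe : (Finset.range m).filter (fun j => cI d j = u)
          = Finset.Ico (psum d u) (psum d (u + 1)) := by
        ext j
        simp only [Finset.mem_filter, Finset.mem_range, Finset.mem_Ico]
        constructor
        · rintro ⟨hj, hcu⟩
          exact (cI_charact d (by omega) u).mp hcu
        · rintro ⟨ha, hb⟩
          have hj : j < m := by
            have := psum_le_wt d (u + 1)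
            omega
          exact ⟨hj, (cI_charact d (by omega) u).mpr ⟨ha, hb⟩⟩
      rw [hfe, Nat.card_Ico, psum_succ]
      omega

end PerpAux
namespace PerpAux

open Finset

/-! ### pairing basics -/

lemma pair_single (w : FreeMonoid ℕ+) (c : ℚ) (F : MvPowerSeries ℕ ℚ) :
    pairPF (MonoidAlgebra.single w c) F = c * MvPowerSeries.coeff (monomialOfW w) F := by
  unfold pairPF; rw [MonoidAlgebra.coeff_single]; exact Finsupp.sum_single_index (by simp)

lemma pair_zero (F : MvPowerSeries ℕ ℚ) : pairPF 0 F = 0 := by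
  unfold pairPF; rw [MonoidAlgebra.coeff_zero]; exact Finsupp.sum_zero_index

lemma pair_add (a b : NSymH) (F : MvPowerSeries ℕ ℚ) :
    pairPF (a + b) F = pairPF a F + pairPF b F := by
  unfold pairPF; rw [MonoidAlgebra.coeff_add]; exact Finsupp.sum_add_index' (fun _ => by simp) (fun _ _ _ => add_mul _ _ _)

lemma pair_sub (a b : NSymH) (F : MvPowerSeries ℕ ℚ) :
    pairPF (a - b) F = pairPF a F - pairPF b F := by
  unfold pairPF; rw [MonoidAlgebra.coeff_sub]; exact Finsupp.sum_sub_index (fun _ _ _ => sub_mul _ _ _)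

lemma pair_smul (c : ℚ) (a : NSymH) (F : MvPowerSeries ℕ ℚ) :
    pairPF (c • a) F = c * pairPF a F := by
  unfold pairPF; rw [MonoidAlgebra.coeff_smul, Finsupp.sum_smul_index (fun _ => by simp), Finsupp.mul_sum]
  apply Finsupp.sum_congr
  intro w _
  rw [mul_assoc]

lemma pair_sum {α : Type*} (s : Finset α) (g : α → NSymH) (F : MvPowerSeries ℕ ℚ) :
    pairPF (∑ x ∈ s, g x) F = ∑ x ∈ s, pairPF (g x) F := by
  classical
  induction s using Finset.induction with
  | empty => simp [pair_zero]
  | insert _ _ h ih => rw [Finset.sum_insert h, Finset.sum_insert h, pair_add, ih]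

/-! ### nondegeneracy -/

def PSF (l : List ℕ) : Finset ℕ :=
  (Finset.range (l.length + 1)).image fun v => (l.take v).sum

lemma mem_PSF (l : List ℕ) (x : ℕ) : x ∈ PSF l ↔ PSl l x := by
  rw [PSF, Finset.mem_image]
  constructor
  · rintro ⟨v, _, hv⟩; exact ⟨v, hv⟩
  · rintro ⟨v, hv⟩
    rcases le_or_gt v l.length with h | h
    · exact ⟨v, Finset.mem_range.mpr (by omega), hv⟩
    · refine ⟨l.length, Finset.mem_range.mpr (by omega), ?_⟩
      rw [List.take_length, ← List.take_of_length_le (le_of_lt h), hv]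

lemma card_PSF (l : List ℕ) (hl : ∀ x ∈ l, 0 < x) : (PSF l).card = l.length + 1 := by
  rw [PSF, Finset.card_image_of_injOn, Finset.card_range]
  intro v hv v' hv' heq
  simp only [Finset.mem_coe, Finset.mem_range] at hv hv'
  by_contra hne
  have heq' : (List.take v l).sum = (List.take v' l).sum := heq
  rcases lt_or_gt_of_ne hne with h | h
  · have := takesum_strict l hl h (by omega) (by omega)
    omega
  · have := takesum_strict l hl h (by omega) (by omega)
    omega

lemma pair_injective (a : NSymH)
    (h : ∀ (m : ℕ) (γ : Composition m), pairPF a (Ffun γ) = 0) : a = 0 := by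
  by_contra ha
  obtain ⟨w₀, hw₀⟩ := Finsupp.support_nonempty_iff.mpr (fun h0 => ha (MonoidAlgebra.coeff_eq_zero.mp h0))
  classical
  set S := a.coeff.support.filter (fun w => (lst w).sum = (lst w₀).sum) with hS
  have hSne : S.Nonempty := ⟨w₀, by simp [hS, hw₀]⟩
  obtain ⟨w', hw'S, hmax⟩ := S.exists_max_image (fun w => (lst w).length) hSne
  have hw'supp : w' ∈ a.coeff.support := (Finset.mem_filter.mp hw'S).1
  have hw'sum : (lst w').sum = (lst w₀).sum := (Finset.mem_filter.mp hw'S).2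
  set γ : Composition ((lst w').sum) :=
    ⟨lst w', fun hx => lst_pos w' _ hx, rfl⟩ with hγ
  have hγb : γ.blocks = lst w' := rfl
  have hpair := h (lst w').sum γ
  rw [pairPF] at hpair
  rw [Finsupp.sum] at hpair
  have hterm : ∀ w ∈ a.coeff.support, w ≠ w' →
      a.coeff w * MvPowerSeries.coeff (monomialOfW w) (Ffun γ) = 0 := by
    intro w hw hne
    rw [monomialOfW_eq, coeff_Ffun]
    rw [if_neg, mul_zero]
    rintro ⟨hwt, hps⟩
    rw [wt_monoL] at hwt
    have hwS : w ∈ S := Finset.mem_filter.mpr ⟨hw, by omega⟩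
    have hlen : (lst w).length ≤ (lst w').length := hmax w hwS
    have hsub : ∀ x, PSl (lst w') x → PSl (lst w) x := by
      intro x hx
      rw [← hγb, psl_blocks_iff] at hx
      rcases hx with rfl | rfl | hx
      · exact psl_zero _
      · rw [← hwt]; exact psl_sum _
      · obtain ⟨v, hv⟩ := hps x hx
        rw [psum_monoL] at hv
        exact ⟨v, hv⟩
    have hFsub : PSF (lst w') ⊆ PSF (lst w) := by
      intro x hx
      rw [mem_PSF] at hx ⊢
      exact hsub x hx
    have hcard : (PSF (lst w)).card ≤ (PSF (lst w')).card := by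
      rw [card_PSF _ (lst_pos w), card_PSF _ (lst_pos w')]
      omega
    have hFeq : PSF (lst w') = PSF (lst w) :=
      Finset.eq_of_subset_of_card_le hFsub hcard
    have : lst w = lst w' := by
      apply list_eq_of_psl _ _ (lst_pos w) (lst_pos w') (by omega)
      intro x
      rw [← mem_PSF, ← mem_PSF, hFeq]
    exact hne (lst_injective this)
  rw [Finset.sum_eq_single_of_mem w' hw'supp hterm] at hpair
  rw [monomialOfW_eq, coeff_Ffun, if_pos] at hpair
  · rw [mul_one] at hpair
    exact (Finsupp.mem_support_iff.mp hw'supp) hpair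
  · constructor
    · rw [wt_monoL]
    · intro x hx
      have : PSl (lst w') x := by
        rw [← hγb, psl_blocks_iff]
        right; right; exact hx
      obtain ⟨v, hv⟩ := this
      exact ⟨v, by rw [psum_monoL]; exact hv⟩

lemma pair_eq {a b : NSymH}
    (h : ∀ (m : ℕ) (γ : Composition m), pairPF a (Ffun γ) = pairPF b (Ffun γ)) : a = b := by
  have h0 := pair_injective (a - b) (fun m γ => by rw [pair_sub, h m γ, sub_self])
  exact sub_eq_zero.mp h0

end PerpAux
namespace PerpAux

open Finset

/-! ### truncation of compositions -/

def truncL : List ℕ → ℕ → List ℕ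
  | _, 0 => []
  | [], s + 1 => [s + 1]
  | b :: t, s + 1 => if s + 1 ≤ b then [s + 1] else b :: truncL t (s + 1 - b)

lemma truncL_pos (l : List ℕ) (s : ℕ) (hl : ∀ x ∈ l, 0 < x) :
    ∀ x ∈ truncL l s, 0 < x := by
  induction l generalizing s with
  | nil =>
    intro x hx
    cases s with
    | zero => simp [truncL] at hx
    | succ s => simp [truncL] at hx; omega
  | cons b t ih =>
    intro x hx
    cases s with
    | zero => simp [truncL] at hx
    | succ s =>
      rw [truncL] at hx
      by_cases h : s + 1 ≤ b
      · rw [if_pos h] at hx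
        simp at hx; omega
      · rw [if_neg h] at hx
        rcases List.mem_cons.mp hx with rfl | hx
        · exact hl x (by simp)
        · exact ih (s + 1 - b) (fun y hy => hl y (by simp [hy])) x hx

lemma truncL_sum (l : List ℕ) (s : ℕ) (h : s ≤ l.sum) : (truncL l s).sum = s := by
  induction l generalizing s with
  | nil =>
    cases s with
    | zero => rfl
    | succ s => simp at h
  | cons b t ih =>
    cases s with
    | zero => rfl
    | succ s =>
      rw [truncL]
      by_cases hb : s + 1 ≤ b
      · rw [if_pos hb]; simp
      · rw [if_neg hb, List.sum_cons, ih (s + 1 - b) (by simp [List.sum_cons] at h; omega)]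
        omega

lemma truncL_psl (l : List ℕ) (s : ℕ) (h : s ≤ l.sum) (x : ℕ) :
    PSl (truncL l s) x ↔ ((PSl l x ∧ x ≤ s) ∨ x = s) := by
  induction l generalizing s x with
  | nil =>
    cases s with
    | zero =>
      rw [show truncL [] 0 = [] from rfl]
      simp only [psl_nil]
      omega
    | succ s => simp at h
  | cons b t ih =>
    cases s with
    | zero =>
      rw [show truncL (b :: t) 0 = [] from rfl, psl_nil]
      constructor
      · rintro rfl; right; rfl
      · rintro (⟨_, hx⟩ | rfl) <;> omega
    | succ s =>
      rw [truncL]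
      by_cases hb : s + 1 ≤ b
      · rw [if_pos hb, psl_cons, psl_cons]
        simp only [psl_nil]
        constructor
        · rintro (rfl | ⟨y, rfl, rfl⟩)
          · left; exact ⟨Or.inl rfl, by omega⟩
          · right; omega
        · rintro (⟨(rfl | ⟨y, hy, rfl⟩), hx2⟩ | rfl)
          · left; rfl
          · have : y = 0 := by omega
            subst this
            right; exact ⟨0, rfl, by omega⟩
          · right; exact ⟨0, rfl, by omega⟩
      · rw [if_neg hb, psl_cons, psl_cons]
        have hsum : s + 1 - b ≤ t.sum := by simp [List.sum_cons] at h; omega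
        constructor
        · rintro (rfl | ⟨y, hy, rfl⟩)
          · left; exact ⟨Or.inl rfl, by omega⟩
          · rcases (ih (s + 1 - b) hsum y).mp hy with ⟨hy1, hy2⟩ | rfl
            · left; exact ⟨Or.inr ⟨y, hy1, rfl⟩, by omega⟩
            · right; omega
        · rintro (⟨(rfl | ⟨y, hy, rfl⟩), hx2⟩ | rfl)
          · left; rfl
          · right
            refine ⟨y, ?_, rfl⟩
            rw [ih (s + 1 - b) hsum y]
            left; exact ⟨hy, by omega⟩
          · right
            refine ⟨s + 1 - b, ?_, by omega⟩
            rw [ih (s + 1 - b) hsum _]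
            right; rfl

def ctrunc {m : ℕ} (γ : Composition m) (s : ℕ) (hs : s ≤ m) : Composition s :=
  ⟨truncL γ.blocks s,
   fun hx => truncL_pos _ _ (fun _ h => γ.blocks_pos h) _ hx,
   truncL_sum _ _ (by rw [γ.blocks_sum]; exact hs)⟩

lemma psl_sum_blocks {m : ℕ} (γ : Composition m) : γ.blocks.sum = m := γ.blocks_sum

lemma mem_compSet_ctrunc {m : ℕ} (γ : Composition m) {s : ℕ} (hs : s ≤ m) (x : ℕ) :
    x ∈ compSet (ctrunc γ s hs) ↔ x ∈ compSet γ ∧ x < s := by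
  have hsum : s ≤ γ.blocks.sum := by rw [γ.blocks_sum]; exact hs
  have hblocks : (ctrunc γ s hs).blocks = truncL γ.blocks s := rfl
  constructor
  · intro hx
    obtain ⟨hx0, hxs⟩ := compSet_bounds (ctrunc γ s hs) hx
    have hpsl : PSl (truncL γ.blocks s) x := by
      rw [← hblocks]
      rw [psl_blocks_iff]
      right; right; exact hx
    rcases (truncL_psl γ.blocks s hsum x).mp hpsl with ⟨hp, _⟩ | rfl
    · rw [psl_blocks_iff] at hp
      rcases hp with rfl | rfl | hp
      · omega
      · omega
      · exact ⟨hp, hxs⟩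
    · omega
  · rintro ⟨hx, hxs⟩
    obtain ⟨hx0, hxm⟩ := compSet_bounds γ hx
    have hpsl : PSl (truncL γ.blocks s) x := by
      rw [truncL_psl γ.blocks s hsum x]
      left
      refine ⟨?_, by omega⟩
      rw [psl_blocks_iff]
      right; right; exact hx
    rw [← hblocks, psl_blocks_iff] at hpsl
    rcases hpsl with rfl | rfl | hp
    · omega
    · omega
    · exact hp

lemma comp_eq_of_compSet {m : ℕ} (γ δ : Composition m) (h : compSet γ = compSet δ) :
    γ = δ := by
  apply Composition.ext
  apply list_eq_of_psl _ _ (fun _ hx => γ.blocks_pos hx) (fun _ hx => δ.blocks_pos hx)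
  · rw [γ.blocks_sum, δ.blocks_sum]
  · intro x
    rw [psl_blocks_iff, psl_blocks_iff, h]

lemma ctrunc_self {m : ℕ} (γ : Composition m) (hs : m ≤ m) : ctrunc γ m hs = γ := by
  apply comp_eq_of_compSet
  ext x
  rw [mem_compSet_ctrunc]
  constructor
  · rintro ⟨hx, _⟩; exact hx
  · intro hx; exact ⟨hx, (compSet_bounds γ hx).2⟩

/-! ### splitting of the OK condition -/

def noMid {m : ℕ} (γ : Composition m) (s : ℕ) : Prop := ∀ x ∈ compSet γ, x ≤ s

lemma OK_split {m : ℕ} (γ : Composition m) (e : ℕ →₀ ℕ) (L r : ℕ)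
    (hsupp : ∀ x ∈ e.support, x < L) :
    (if OKc γ (e + Finsupp.single L r) then (1 : ℚ) else 0) =
    if r ≤ m ∧ noMid γ (m - r) then
      (if OKc (ctrunc γ (m - r) (Nat.sub_le m r)) e then (1 : ℚ) else 0) else 0 := by
  have hwt' : wt (e + Finsupp.single L r) = wt e + r := by rw [wt_add, wt_single]
  have hps : ∀ v, psum (e + Finsupp.single L r) v = psum e v + (if L < v then r else 0) := by
    intro v; rw [psum_add, psum_single]
  have hwtL : psum e L = wt e := psum_eq_wt e hsupp
  by_cases hdeg : wt e + r = m
  · have hrm : r ≤ m := by omega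
    by_cases hnm : noMid γ (m - r)
    · rw [if_pos (show r ≤ m ∧ noMid γ (m - r) from ⟨hrm, hnm⟩)]
      refine if_congr ?_ rfl rfl
      constructor
      · rintro ⟨h1, h2⟩
        refine ⟨by omega, ?_⟩
        intro x hx
        rw [mem_compSet_ctrunc] at hx
        obtain ⟨v, hv⟩ := h2 x hx.1
        rw [hps] at hv
        by_cases hvL : L < v
        · rw [if_pos hvL] at hv
          have : psum e v = wt e := psum_eq_wt e (fun y hy => lt_trans (hsupp y hy) hvL)
          obtain ⟨_, hxm⟩ := compSet_bounds γ hx.1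
          omega
        · rw [if_neg hvL] at hv
          exact ⟨v, by omega⟩
      · rintro ⟨h1, h2⟩
        refine ⟨by omega, ?_⟩
        intro x hx
        obtain ⟨hx0, hxm⟩ := compSet_bounds γ hx
        by_cases hxs : x < m - r
        · obtain ⟨v, hv⟩ := h2 x ((mem_compSet_ctrunc γ _ x).mpr ⟨hx, hxs⟩)
          have hvL : v ≤ L := by
            by_contra hc
            have : psum e v = wt e := psum_eq_wt e (fun y hy => by
              have := hsupp y hy; omega)
            omega
          exact ⟨v, by rw [hps, if_neg (by omega)]; omega⟩
        · have hxle : x ≤ m - r := hnm x hx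
          refine ⟨L, ?_⟩
          rw [hps, if_neg (lt_irrefl L), hwtL]
          omega
    · rw [if_neg (show ¬(r ≤ m ∧ noMid γ (m - r)) from fun hc => hnm hc.2), if_neg]
      rintro ⟨h1, h2⟩
      rw [noMid] at hnm
      push_neg at hnm
      obtain ⟨x, hx, hxgt⟩ := hnm
      obtain ⟨hx0, hxm⟩ := compSet_bounds γ hx
      obtain ⟨v, hv⟩ := h2 x hx
      rw [hps] at hv
      by_cases hvL : L < v
      · rw [if_pos hvL] at hv
        have : psum e v = wt e := psum_eq_wt e (fun y hy => lt_trans (hsupp y hy) hvL)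
        omega
      · rw [if_neg hvL] at hv
        have := psum_le_wt e v
        omega
  · rw [if_neg (show ¬ OKc γ (e + Finsupp.single L r) from fun hc => by
      obtain ⟨h1, -⟩ := hc
      rw [hwt'] at h1
      exact hdeg h1)]
    by_cases houter : r ≤ m ∧ noMid γ (m - r)
    · rw [if_pos houter, if_neg]
      rintro ⟨h1, -⟩
      exact hdeg (by omega)
    · rw [if_neg houter]

end PerpAux
namespace PerpAux

open Finset

/-! ### coefficients of Frow and Fcol -/

lemma compSet_single (k : ℕ) (h : 0 < k) : compSet (Composition.single k h) = ∅ := by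
  have hlen : (Composition.single k h).length = 1 := by
    show (Composition.single k h).blocks.length = 1
    rw [Composition.single_blocks]
    rfl
  rw [compSet, hlen]
  simp

lemma coeff_Frow (i : ℕ) (d : ℕ →₀ ℕ) :
    MvPowerSeries.coeff d (Frow i) = if wt d = i then 1 else 0 := by
  cases i with
  | zero =>
    rw [Frow, dif_neg (lt_irrefl 0), MvPowerSeries.coeff_one]
    exact if_congr wt_eq_zero.symm rfl rfl
  | succ i =>
    rw [Frow, dif_pos (Nat.succ_pos i), coeff_Ffun]
    refine if_congr ?_ rfl rfl
    constructor
    · rintro ⟨h1, _⟩; exact h1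
    · intro h1
      refine ⟨h1, ?_⟩
      intro x hx
      rw [compSet_single] at hx
      simp at hx

lemma compSet_ones (i : ℕ) : compSet (Composition.ones i) = Finset.Icc 1 (i - 1) := by
  ext x
  rw [mem_compSet, Finset.mem_Icc]
  constructor
  · rintro ⟨k, h1, h2, h3⟩
    rw [Composition.ones_length] at h2
    rw [Composition.ones_blocks, List.take_replicate, List.sum_replicate, smul_eq_mul,
      mul_one] at h3
    omega
  · rintro ⟨h1, h2⟩
    refine ⟨x, h1, by rw [Composition.ones_length]; exact h2, ?_⟩
    rw [Composition.ones_blocks, List.take_replicate, List.sum_replicate, smul_eq_mul, mul_one]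
    omega

lemma psum_hits (d : ℕ →₀ ℕ) (h1 : ∀ v, d v ≤ 1) : ∀ x, x ≤ wt d → ∃ v, psum d v = x := by
  intro x
  induction x with
  | zero => intro _; exact ⟨0, psum_zero_v d⟩
  | succ x ih =>
    intro hx
    obtain ⟨v, hv⟩ := ih (by omega)
    set B := d.support.sup id + 1 with hB
    have hBwt : psum d B = wt d := psum_eq_wt d (fun y hy => by
      have := Finset.le_sup (f := id) hy
      simp only [id] at this
      omega)
    have hvB : v < B := by
      by_contra hc
      have := psum_mono d (show B ≤ v by omega)
      omega
    have hex : ∃ u, v ≤ u ∧ d u ≠ 0 := by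
      by_contra hc
      push_neg at hc
      have hz : ∑ u ∈ Finset.Ico v B, d u = 0 :=
        Finset.sum_eq_zero (fun u hu => hc u (Finset.mem_Ico.mp hu).1)
      have := Finset.sum_range_add_sum_Ico (fun u => d u) (le_of_lt hvB)
      rw [hz] at this
      simp only [add_zero] at this
      rw [show psum d v = ∑ u ∈ Finset.range v, d u from rfl] at hv
      rw [show psum d B = ∑ u ∈ Finset.range B, d u from rfl] at hBwt
      omega
    obtain ⟨u, ⟨huv, hune⟩, hmin'⟩ :
        ∃ u, (v ≤ u ∧ d u ≠ 0) ∧ ∀ u' < u, ¬(v ≤ u' ∧ d u' ≠ 0) :=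
      ⟨Nat.find hex, Nat.find_spec hex, fun u' h => Nat.find_min hex h⟩
    have hmin : ∀ u', v ≤ u' → u' < u → d u' = 0 := by
      intro u' h1' h2'
      by_contra hc
      exact hmin' u' h2' ⟨h1', hc⟩
    have hz : ∑ y ∈ Finset.Ico v u, d y = 0 :=
      Finset.sum_eq_zero (fun y hy => hmin y (Finset.mem_Ico.mp hy).1 (Finset.mem_Ico.mp hy).2)
    have hsplit := Finset.sum_range_add_sum_Ico (fun y => d y) huv
    have hpu : psum d u = x := by
      rw [show psum d u = ∑ y ∈ Finset.range u, d y from rfl, ← hsplit, hz, add_zero]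
      exact hv
    refine ⟨u + 1, ?_⟩
    rw [psum_succ, hpu]
    have := h1 u
    omega

lemma psum_skip (d : ℕ →₀ ℕ) {i : ℕ} (hwt : wt d = i)
    (h2 : ∀ x, 1 ≤ x → x ≤ i - 1 → ∃ v, psum d v = x) : ∀ v, d v ≤ 1 := by
  by_contra hc
  push_neg at hc
  obtain ⟨v0, hv0⟩ := hc
  have hps : psum d (v0 + 1) = psum d v0 + d v0 := psum_succ d v0
  have hle : psum d (v0 + 1) ≤ i := by rw [← hwt]; exact psum_le_wt d _
  obtain ⟨v, hv⟩ := h2 (psum d v0 + 1) (by omega) (by omega)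
  rcases le_or_gt v v0 with h | h
  · have := psum_mono d h
    omega
  · have := psum_mono d (show v0 + 1 ≤ v by omega)
    omega

lemma coeff_Fcol (i : ℕ) (d : ℕ →₀ ℕ) :
    MvPowerSeries.coeff d (Fcol i) = if (wt d = i ∧ ∀ v, d v ≤ 1) then 1 else 0 := by
  rw [Fcol, coeff_Ffun]
  refine if_congr ?_ rfl rfl
  constructor
  · rintro ⟨h1, h2⟩
    refine ⟨h1, ?_⟩
    apply psum_skip d h1
    intro x hx1 hx2
    exact h2 x (by rw [compSet_ones, Finset.mem_Icc]; omega)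
  · rintro ⟨h1, h2⟩
    refine ⟨h1, ?_⟩
    intro x hx
    rw [compSet_ones, Finset.mem_Icc] at hx
    exact psum_hits d h2 x (by omega)

/-! ### antidiagonal splitting -/

lemma adsplit {M : Type*} [AddCommMonoid M] (D : ℕ →₀ ℕ) (L k : ℕ) (hD : D L = 0)
    (f : (ℕ →₀ ℕ) × (ℕ →₀ ℕ) → M) :
    ∑ p ∈ Finset.HasAntidiagonal.antidiagonal (D + Finsupp.single L k), f p =
    ∑ t ∈ Finset.range (k + 1), ∑ q ∈ Finset.HasAntidiagonal.antidiagonal D,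
      f (q.1 + Finsupp.single L t, q.2 + Finsupp.single L (k - t)) := by
  classical
  rw [← Finset.sum_product' (Finset.range (k + 1)) (Finset.HasAntidiagonal.antidiagonal D)
    (fun t q => f (q.1 + Finsupp.single L t, q.2 + Finsupp.single L (k - t)))]
  apply Finset.sum_nbij'
    (i := fun p : (ℕ →₀ ℕ) × (ℕ →₀ ℕ) =>
      ((p.1 L : ℕ), (Finsupp.erase L p.1, Finsupp.erase L p.2)))
    (j := fun tq : ℕ × ((ℕ →₀ ℕ) × (ℕ →₀ ℕ)) =>
      (tq.2.1 + Finsupp.single L tq.1, tq.2.2 + Finsupp.single L (k - tq.1)))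
  · intro p hp
    rw [Finset.HasAntidiagonal.mem_antidiagonal] at hp
    have hL : p.1 L + p.2 L = k := by
      have := congrArg (fun d => d L) hp
      simpa [hD] using this
    rw [Finset.mem_product]
    constructor
    · rw [Finset.mem_range]; omega
    · rw [Finset.HasAntidiagonal.mem_antidiagonal, ← Finsupp.erase_add]
      rw [hp, Finsupp.erase_add, Finsupp.erase_single, add_zero]
      ext a
      rw [Finsupp.erase_apply]
      split
      · rename_i ha; rw [ha, hD]
      · rfl
  · intro tq htq
    rw [Finset.mem_product, Finset.mem_range, Finset.HasAntidiagonal.mem_antidiagonal] at htq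
    rw [Finset.HasAntidiagonal.mem_antidiagonal]
    have ht : tq.1 + (k - tq.1) = k := by omega
    calc tq.2.1 + Finsupp.single L tq.1 + (tq.2.2 + Finsupp.single L (k - tq.1))
        = (tq.2.1 + tq.2.2) + (Finsupp.single L tq.1 + Finsupp.single L (k - tq.1)) := by
          abel
      _ = D + Finsupp.single L k := by
          rw [htq.2, ← Finsupp.single_add, ht]
  · intro p hp
    rw [Finset.HasAntidiagonal.mem_antidiagonal] at hp
    have hL : p.1 L + p.2 L = k := by
      have := congrArg (fun d => d L) hp
      simpa [hD] using this
    have h1 : Finsupp.erase L p.1 + Finsupp.single L (p.1 L) = p.1 :=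
      Finsupp.erase_add_single L p.1
    have h2 : Finsupp.erase L p.2 + Finsupp.single L (k - p.1 L) = p.2 := by
      rw [show k - p.1 L = p.2 L from by omega]
      exact Finsupp.erase_add_single L p.2
    exact Prod.ext h1 h2
  · intro tq htq
    rw [Finset.mem_product, Finset.mem_range, Finset.HasAntidiagonal.mem_antidiagonal] at htq
    have hq1L : tq.2.1 L = 0 := by
      have := congrArg (fun d => d L) htq.2
      simp only [Finsupp.add_apply, hD] at this
      omega
    have hq2L : tq.2.2 L = 0 := by
      have := congrArg (fun d => d L) htq.2
      simp only [Finsupp.add_apply, hD] at this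
      omega
    have hfst : (tq.2.1 + Finsupp.single L tq.1) L = tq.1 := by
      rw [Finsupp.add_apply, hq1L, Finsupp.single_eq_same, zero_add]
    have he1 : Finsupp.erase L (tq.2.1 + Finsupp.single L tq.1) = tq.2.1 := by
      rw [Finsupp.erase_add, Finsupp.erase_single, add_zero]
      ext a
      rw [Finsupp.erase_apply]
      split
      · rename_i ha; rw [ha, hq1L]
      · rfl
    have he2 : Finsupp.erase L (tq.2.2 + Finsupp.single L (k - tq.1)) = tq.2.2 := by
      rw [Finsupp.erase_add, Finsupp.erase_single, add_zero]
      ext a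
      rw [Finsupp.erase_apply]
      split
      · rename_i ha; rw [ha, hq2L]
      · rfl
    rw [Prod.ext_iff]
    refine ⟨hfst, ?_⟩
    rw [Prod.ext_iff]
    exact ⟨he1, he2⟩
  · intro p hp
    rw [Finset.HasAntidiagonal.mem_antidiagonal] at hp
    have hL : p.1 L + p.2 L = k := by
      have := congrArg (fun d => d L) hp
      simpa [hD] using this
    have h1 : Finsupp.erase L p.1 + Finsupp.single L (p.1 L) = p.1 :=
      Finsupp.erase_add_single L p.1
    have h2 : Finsupp.erase L p.2 + Finsupp.single L (k - p.1 L) = p.2 := by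
      rw [show k - p.1 L = p.2 L from by omega]
      exact Finsupp.erase_add_single L p.2
    show f p = f (_ + Finsupp.single L (p.1 L), _ + Finsupp.single L (k - p.1 L))
    rw [h1, h2]

end PerpAux
namespace PerpAux

open Finset

lemma monoL_at_len (l : List ℕ) : monoL l l.length = 0 := by
  rw [monoL_apply, List.getD_eq_default _ _ le_rfl]

lemma single_eq_ma (w : FreeMonoid ℕ+) (c : ℚ) :
    (MonoidAlgebra.single w c : NSymH) = MonoidAlgebra.single w c := rfl

/-- adjoint of right multiplication by `h_k` on the `F`-side -/
lemma Bh (k : ℕ) {m : ℕ} (γ : Composition m) (a : NSymH) :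
    pairPF (a * hW [k]) (Ffun γ) =
    if k ≤ m ∧ noMid γ (m - k) then
      pairPF a (Ffun (ctrunc γ (m - k) (Nat.sub_le m k))) else 0 := by
  induction a using MonoidAlgebra.induction with
  | zero =>
    rw [zero_mul, pair_zero]
    split <;> simp [pair_zero]
  | single_add w c a hwa hc ih =>
    rw [add_mul, pair_add, ih]
    have hsingle : pairPF (MonoidAlgebra.single w c * hW [k]) (Ffun γ)
        = if k ≤ m ∧ noMid γ (m - k)
          then pairPF (MonoidAlgebra.single w c) (Ffun (ctrunc γ (m - k) (Nat.sub_le m k)))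
          else 0 := by
      rw [hW_eq, MonoidAlgebra.single_mul_single, mul_one, pair_single, monomialOfW_mul_single,
        coeff_Ffun, OK_split γ (monoL (lst w)) (lst w).length k (monoL_support _),
        pair_single, monomialOfW_eq, coeff_Ffun, mul_ite, mul_zero]
    rw [hsingle]
    by_cases hcond : k ≤ m ∧ noMid γ (m - k)
    · rw [if_pos hcond, if_pos hcond, if_pos hcond, pair_add]
    · rw [if_neg hcond, if_neg hcond, if_neg hcond, add_zero]

lemma vals_split (q : ℕ →₀ ℕ) (L t : ℕ) (hq : q L = 0) :
    (∀ v, (q + Finsupp.single L t) v ≤ 1) ↔ (t ≤ 1 ∧ ∀ v, q v ≤ 1) := by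
  constructor
  · intro h
    constructor
    · have := h L
      rw [Finsupp.add_apply, hq, Finsupp.single_eq_same] at this
      omega
    · intro v
      by_cases hv : v = L
      · rw [hv, hq]; omega
      · have := h v
        rw [Finsupp.add_apply, Finsupp.single_apply, if_neg (fun hh => hv hh.symm)] at this
        omega
  · rintro ⟨h1, h2⟩ v
    rw [Finsupp.add_apply, Finsupp.single_apply]
    by_cases hv : L = v
    · rw [if_pos hv, ← hv, hq]; omega
    · rw [if_neg hv]
      have := h2 v
      omega

lemma rowSplit (i k : ℕ) {m : ℕ} (γ : Composition m) (a : NSymH) :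
    pairPF (a * hW [k]) (Frow i * Ffun γ) =
    ∑ t ∈ Finset.range (min i k + 1),
      if k - t ≤ m ∧ noMid γ (m - (k - t)) then
        pairPF a (Frow (i - t) * Ffun (ctrunc γ (m - (k - t)) (Nat.sub_le m (k - t))))
      else 0 := by
  induction a using MonoidAlgebra.induction with
  | zero =>
    rw [zero_mul, pair_zero]
    rw [Finset.sum_eq_zero]
    intro t _
    split <;> simp [pair_zero]
  | single_add w c a hwa hc ih =>
    rw [add_mul, pair_add, ih]
    have hsingle : pairPF (MonoidAlgebra.single w c * hW [k]) (Frow i * Ffun γ)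
        = ∑ t ∈ Finset.range (min i k + 1),
          if k - t ≤ m ∧ noMid γ (m - (k - t)) then
            pairPF (MonoidAlgebra.single w c)
              (Frow (i - t) * Ffun (ctrunc γ (m - (k - t)) (Nat.sub_le m (k - t))))
          else 0 := by
      rw [hW_eq, MonoidAlgebra.single_mul_single, mul_one, pair_single, monomialOfW_mul_single,
        MvPowerSeries.coeff_mul,
        adsplit (monoL (lst w)) (lst w).length k (monoL_at_len _), Finset.mul_sum]
      rw [← Finset.sum_subset (Finset.range_subset_range.mpr (show min i k + 1 ≤ k + 1 by omega))
        ?_]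
      · apply Finset.sum_congr rfl
        intro t ht
        rw [Finset.mem_range] at ht
        have hti : t ≤ i := by omega
        have hinner : ∀ q ∈ Finset.HasAntidiagonal.antidiagonal (monoL (lst w)),
            MvPowerSeries.coeff (q.1 + Finsupp.single (lst w).length t) (Frow i) *
              MvPowerSeries.coeff (q.2 + Finsupp.single (lst w).length (k - t)) (Ffun γ)
            = (if wt q.1 = i - t then (1:ℚ) else 0) *
              (if k - t ≤ m ∧ noMid γ (m - (k - t)) then
                (if OKc (ctrunc γ (m - (k - t)) (Nat.sub_le m (k - t))) q.2 then (1:ℚ) else 0)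
              else 0) := by
          intro q hq
          rw [Finset.HasAntidiagonal.mem_antidiagonal] at hq
          have hq2supp : ∀ x ∈ q.2.support, x < (lst w).length := by
            intro x hx
            apply monoL_support (lst w)
            rw [Finsupp.mem_support_iff]
            have := congrArg (fun d => d x) hq
            simp only [Finsupp.add_apply] at this
            rw [Finsupp.mem_support_iff] at hx
            omega
          rw [coeff_Frow, wt_add, wt_single, coeff_Ffun,
            OK_split γ q.2 (lst w).length (k - t) hq2supp]
          congr 1
          exact if_congr (by omega) rfl rfl
        rw [Finset.sum_congr rfl hinner]
        by_cases hcond : k - t ≤ m ∧ noMid γ (m - (k - t))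
        · rw [if_pos hcond, pair_single, MvPowerSeries.coeff_mul, monomialOfW_eq,
            Finset.mul_sum, Finset.mul_sum]
          apply Finset.sum_congr rfl
          intro q hq
          rw [if_pos hcond, coeff_Frow, coeff_Ffun]
        · rw [if_neg hcond]
          apply mul_eq_zero_of_right
          apply Finset.sum_eq_zero
          intro q _
          rw [if_neg hcond, mul_zero]
      · intro t ht hts
        rw [Finset.mem_range] at ht
        rw [Finset.mem_range] at hts
        apply mul_eq_zero_of_right
        apply Finset.sum_eq_zero
        intro q _
        rw [coeff_Frow, wt_add, wt_single, if_neg (by omega), zero_mul]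
    rw [hsingle, ← Finset.sum_add_distrib]
    apply Finset.sum_congr rfl
    intro t _
    by_cases hcond : k - t ≤ m ∧ noMid γ (m - (k - t))
    · rw [if_pos hcond, if_pos hcond, if_pos hcond, pair_add]
    · rw [if_neg hcond, if_neg hcond, if_neg hcond, add_zero]

lemma colSplit (i k : ℕ) {m : ℕ} (γ : Composition m) (hi : 1 ≤ i) (hk : 1 ≤ k) (a : NSymH) :
    pairPF (a * hW [k]) (Fcol i * Ffun γ) =
    (if k ≤ m ∧ noMid γ (m - k) then
        pairPF a (Fcol i * Ffun (ctrunc γ (m - k) (Nat.sub_le m k))) else 0)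
    + (if k - 1 ≤ m ∧ noMid γ (m - (k - 1)) then
        pairPF a (Fcol (i - 1) * Ffun (ctrunc γ (m - (k - 1)) (Nat.sub_le m (k - 1)))) else 0) := by
  induction a using MonoidAlgebra.induction with
  | zero =>
    rw [zero_mul, pair_zero]
    have : pairPF (0 : NSymH) = fun _ => 0 := by
      funext F
      exact pair_zero F
    rw [this]
    split <;> split <;> simp
  | single_add w c a hwa hc ih =>
    rw [add_mul, pair_add, ih]
    have hsingle : pairPF (MonoidAlgebra.single w c * hW [k]) (Fcol i * Ffun γ)
        = (if k ≤ m ∧ noMid γ (m - k) then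
            pairPF (MonoidAlgebra.single w c)
              (Fcol i * Ffun (ctrunc γ (m - k) (Nat.sub_le m k))) else 0)
          + (if k - 1 ≤ m ∧ noMid γ (m - (k - 1)) then
            pairPF (MonoidAlgebra.single w c)
              (Fcol (i - 1) * Ffun (ctrunc γ (m - (k - 1)) (Nat.sub_le m (k - 1)))) else 0) := by
      rw [hW_eq, MonoidAlgebra.single_mul_single, mul_one, pair_single, monomialOfW_mul_single,
        MvPowerSeries.coeff_mul,
        adsplit (monoL (lst w)) (lst w).length k (monoL_at_len _), Finset.mul_sum]
      have hinner : ∀ t, ∀ q ∈ Finset.HasAntidiagonal.antidiagonal (monoL (lst w)),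
          MvPowerSeries.coeff (q.1 + Finsupp.single (lst w).length t) (Fcol i) *
            MvPowerSeries.coeff (q.2 + Finsupp.single (lst w).length (k - t)) (Ffun γ)
          = (if (wt q.1 + t = i ∧ (t ≤ 1 ∧ ∀ v, q.1 v ≤ 1)) then (1:ℚ) else 0) *
            (if k - t ≤ m ∧ noMid γ (m - (k - t)) then
              (if OKc (ctrunc γ (m - (k - t)) (Nat.sub_le m (k - t))) q.2 then (1:ℚ) else 0)
            else 0) := by
        intro t q hq
        rw [Finset.HasAntidiagonal.mem_antidiagonal] at hq
        have hq1L : q.1 (lst w).length = 0 := by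
          have := congrArg (fun d => d (lst w).length) hq
          simp only [Finsupp.add_apply] at this
          have h0 := monoL_at_len (lst w)
          omega
        have hq2supp : ∀ x ∈ q.2.support, x < (lst w).length := by
          intro x hx
          apply monoL_support (lst w)
          rw [Finsupp.mem_support_iff]
          have := congrArg (fun d => d x) hq
          simp only [Finsupp.add_apply] at this
          rw [Finsupp.mem_support_iff] at hx
          omega
        rw [coeff_Fcol, coeff_Ffun, OK_split γ q.2 (lst w).length (k - t) hq2supp]
        congr 1
        refine if_congr ?_ rfl rfl
        rw [wt_add, wt_single, vals_split q.1 _ t hq1L]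
      have hsum2 : ∑ t ∈ Finset.range (k + 1), (c * ∑ q ∈ Finset.HasAntidiagonal.antidiagonal (monoL (lst w)),
          MvPowerSeries.coeff (q.1 + Finsupp.single (lst w).length t) (Fcol i) *
            MvPowerSeries.coeff (q.2 + Finsupp.single (lst w).length (k - t)) (Ffun γ))
          = ∑ t ∈ Finset.range 2, (c * ∑ q ∈ Finset.HasAntidiagonal.antidiagonal (monoL (lst w)),
          MvPowerSeries.coeff (q.1 + Finsupp.single (lst w).length t) (Fcol i) *
            MvPowerSeries.coeff (q.2 + Finsupp.single (lst w).length (k - t)) (Ffun γ)) := by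
        symm
        apply Finset.sum_subset (Finset.range_subset_range.mpr (by omega))
        intro t ht hts
        rw [Finset.mem_range] at ht hts
        rw [Finset.sum_congr rfl (hinner t)]
        apply mul_eq_zero_of_right
        apply Finset.sum_eq_zero
        intro q _
        rw [if_neg (by omega), zero_mul]
      rw [hsum2, Finset.sum_range_succ, Finset.sum_range_succ, Finset.sum_range_zero, zero_add]
      congr 1
      · -- t = 0 term
        rw [Finset.sum_congr rfl (hinner 0)]
        simp only [Nat.sub_zero]
        by_cases hcond : k ≤ m ∧ noMid γ (m - k)
        · rw [if_pos hcond, pair_single, MvPowerSeries.coeff_mul, monomialOfW_eq,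
            Finset.mul_sum, Finset.mul_sum]
          apply Finset.sum_congr rfl
          intro q hq
          rw [if_pos hcond, coeff_Fcol, coeff_Ffun]
          have h5 : (wt q.1 + 0 = i ∧ (0 ≤ 1 ∧ ∀ v, q.1 v ≤ 1)) ↔
              (wt q.1 = i ∧ ∀ v, q.1 v ≤ 1) := by
            constructor
            · rintro ⟨h1, _, h3⟩; exact ⟨by omega, h3⟩
            · rintro ⟨h1, h3⟩; exact ⟨by omega, by omega, h3⟩
          rw [if_congr h5 rfl rfl]
        · rw [if_neg hcond]
          apply mul_eq_zero_of_right
          apply Finset.sum_eq_zero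
          intro q _
          rw [if_neg hcond, mul_zero]
      · -- t = 1 term
        rw [Finset.sum_congr rfl (hinner 1)]
        by_cases hcond : k - 1 ≤ m ∧ noMid γ (m - (k - 1))
        · rw [if_pos hcond, pair_single, MvPowerSeries.coeff_mul, monomialOfW_eq,
            Finset.mul_sum, Finset.mul_sum]
          apply Finset.sum_congr rfl
          intro q hq
          rw [if_pos hcond, coeff_Fcol, coeff_Ffun]
          have h5 : (wt q.1 + 1 = i ∧ (1 ≤ 1 ∧ ∀ v, q.1 v ≤ 1)) ↔
              (wt q.1 = i - 1 ∧ ∀ v, q.1 v ≤ 1) := by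
            constructor
            · rintro ⟨h1, _, h3⟩; exact ⟨by omega, h3⟩
            · rintro ⟨h1, h3⟩; exact ⟨by omega, by omega, h3⟩
          rw [if_congr h5 rfl rfl]
        · rw [if_neg hcond]
          apply mul_eq_zero_of_right
          apply Finset.sum_eq_zero
          intro q _
          rw [if_neg hcond, mul_zero]
    rw [hsingle]
    by_cases h1 : k ≤ m ∧ noMid γ (m - k) <;>
      by_cases h2 : k - 1 ≤ m ∧ noMid γ (m - (k - 1))
    · rw [if_pos h1, if_pos h2, if_pos h1, if_pos h2, if_pos h1, if_pos h2,
        pair_add, pair_add]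
      ring
    · rw [if_pos h1, if_neg h2, if_pos h1, if_neg h2, if_pos h1, if_neg h2,
        pair_add]
      ring
    · rw [if_neg h1, if_pos h2, if_neg h1, if_pos h2, if_neg h1, if_pos h2,
        pair_add]
      ring
    · rw [if_neg h1, if_neg h2, if_neg h1, if_neg h2, if_neg h1, if_neg h2]
      ring

end PerpAux
namespace PerpAux

open Finset

/-! ### the h-rules -/

lemma rowRule (U : ℕ → NSymH →ₗ[ℚ] NSymH)
    (hU : ∀ (k : ℕ) (a : NSymH) (m : ℕ) (γ : Composition m),
      pairPF (U k a) (Ffun γ) = pairPF a (Frow k * Ffun γ))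
    (i k : ℕ) (f : NSymH) :
    U i (f * hW [k]) = ∑ t ∈ Finset.range (min i k + 1), U (i - t) f * hW [k - t] := by
  apply pair_eq
  intro m γ
  rw [hU, rowSplit i k γ f, pair_sum]
  apply Finset.sum_congr rfl
  intro t _
  rw [Bh (k - t) γ (U (i - t) f)]
  by_cases hcond : k - t ≤ m ∧ noMid γ (m - (k - t))
  · rw [if_pos hcond, if_pos hcond, hU]
  · rw [if_neg hcond, if_neg hcond]

lemma colRule (V : ℕ → NSymH →ₗ[ℚ] NSymH)
    (hV : ∀ (k : ℕ) (a : NSymH) (m : ℕ) (γ : Composition m),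
      pairPF (V k a) (Ffun γ) = pairPF a (Fcol k * Ffun γ))
    (i k : ℕ) (hi : 1 ≤ i) (hk : 1 ≤ k) (f : NSymH) :
    V i (f * hW [k]) = V i f * hW [k] + V (i - 1) f * hW [k - 1] := by
  apply pair_eq
  intro m γ
  rw [hV, colSplit i k γ hi hk f, pair_add, Bh k γ (V i f), Bh (k - 1) γ (V (i - 1) f)]
  congr 1
  · by_cases hcond : k ≤ m ∧ noMid γ (m - k)
    · rw [if_pos hcond, if_pos hcond, hV]
    · rw [if_neg hcond, if_neg hcond]
  · by_cases hcond : k - 1 ≤ m ∧ noMid γ (m - (k - 1))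
    · rw [if_pos hcond, if_pos hcond, hV]
    · rw [if_neg hcond, if_neg hcond]

lemma Frow_zero : Frow 0 = 1 := by
  rw [Frow, dif_neg (lt_irrefl 0)]

lemma Fcol_zero : Fcol 0 = 1 := by
  apply MvPowerSeries.ext
  intro d
  rw [coeff_Fcol, MvPowerSeries.coeff_one]
  refine if_congr ?_ rfl rfl
  constructor
  · rintro ⟨h1, _⟩; exact wt_eq_zero.mp h1
  · rintro rfl
    refine ⟨wt_zero, ?_⟩
    intro v; simp

lemma rowId (U : ℕ → NSymH →ₗ[ℚ] NSymH)
    (hU : ∀ (k : ℕ) (a : NSymH) (m : ℕ) (γ : Composition m),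
      pairPF (U k a) (Ffun γ) = pairPF a (Frow k * Ffun γ))
    (a : NSymH) : U 0 a = a := by
  apply pair_eq
  intro m γ
  rw [hU, Frow_zero, one_mul]

lemma colId (V : ℕ → NSymH →ₗ[ℚ] NSymH)
    (hV : ∀ (k : ℕ) (a : NSymH) (m : ℕ) (γ : Composition m),
      pairPF (V k a) (Ffun γ) = pairPF a (Fcol k * Ffun γ))
    (a : NSymH) : V 0 a = a := by
  apply pair_eq
  intro m γ
  rw [hV, Fcol_zero, one_mul]

lemma monomialOfW_one : monomialOfW (1 : FreeMonoid ℕ+) = 0 := by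
  rw [monomialOfW_eq]
  have : lst (1 : FreeMonoid ℕ+) = [] := rfl
  rw [this, monoL]
  simp

lemma pair_one (F : MvPowerSeries ℕ ℚ) : pairPF 1 F = MvPowerSeries.coeff 0 F := by
  rw [MonoidAlgebra.one_def, pair_single, monomialOfW_one, one_mul]

lemma rowUnit (U : ℕ → NSymH →ₗ[ℚ] NSymH)
    (hU : ∀ (k : ℕ) (a : NSymH) (m : ℕ) (γ : Composition m),
      pairPF (U k a) (Ffun γ) = pairPF a (Frow k * Ffun γ))
    (k : ℕ) (hk : 1 ≤ k) : U k 1 = 0 := by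
  apply pair_injective
  intro m γ
  rw [hU, pair_one, MvPowerSeries.coeff_mul, Finsupp.antidiagonal_zero,
    Finset.sum_singleton, coeff_Frow, if_neg (by rw [wt_zero]; omega), zero_mul]

lemma colUnit (V : ℕ → NSymH →ₗ[ℚ] NSymH)
    (hV : ∀ (k : ℕ) (a : NSymH) (m : ℕ) (γ : Composition m),
      pairPF (V k a) (Ffun γ) = pairPF a (Fcol k * Ffun γ))
    (k : ℕ) (hk : 1 ≤ k) : V k 1 = 0 := by
  apply pair_injective
  intro m γ
  rw [hV, pair_one, MvPowerSeries.coeff_mul, Finsupp.antidiagonal_zero,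
    Finset.sum_singleton, coeff_Fcol, if_neg (by rw [wt_zero]; omega), zero_mul]

/-! ### recursion for eN -/

lemma comp0_eq (α : Composition 0) : α = Composition.ones 0 := by
  apply Composition.ext
  have hsum := α.blocks_sum
  have : α.blocks = [] := by
    cases hb : α.blocks with
    | nil => rfl
    | cons b t =>
      exfalso
      have hbpos := α.blocks_pos (by rw [hb]; exact List.mem_cons_self)
      rw [hb, List.sum_cons] at hsum
      omega
  rw [this, Composition.ones_blocks]
  rfl

lemma eN_zero : eN 0 = 1 := by
  rw [eN, show (Finset.univ : Finset (Composition 0)) = {Composition.ones 0} from by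
    ext α
    simp [comp0_eq α]]
  rw [Finset.sum_singleton, Composition.ones_blocks]
  show ((-1 : ℚ) ^ (0 - (Composition.ones 0).length)) • hW [] = 1
  rw [Composition.ones_length, hW_nil]
  norm_num

lemma headI_tail_sum (l : List ℕ) (h : l ≠ []) : l.headI + l.tail.sum = l.sum := by
  cases l with
  | nil => contradiction
  | cons b t => simp

lemma blocks_ne_nil {j : ℕ} (hj : 1 ≤ j) (α : Composition j) : α.blocks ≠ [] := by
  intro h
  have := α.blocks_sum
  rw [h] at this
  simp at this
  omega

lemma headI_pos {j : ℕ} (hj : 1 ≤ j) (α : Composition j) : 1 ≤ α.blocks.headI := by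
  cases hb : α.blocks with
  | nil => exact absurd hb (blocks_ne_nil hj α)
  | cons b t =>
    have := α.blocks_pos (by rw [hb]; exact List.mem_cons_self)
    simp only [List.headI]
    omega

lemma headI_le {j : ℕ} (hj : 1 ≤ j) (α : Composition j) : α.blocks.headI ≤ j := by
  have h1 := headI_tail_sum α.blocks (blocks_ne_nil hj α)
  have h2 := α.blocks_sum
  omega

def tlComp {j : ℕ} (hj : 1 ≤ j) (α : Composition j) :
    Composition (j - 1 - (α.blocks.headI - 1)) :=
  ⟨α.blocks.tail,
   fun hx => α.blocks_pos (List.mem_of_mem_tail hx),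
   by
     have h1 := headI_tail_sum α.blocks (blocks_ne_nil hj α)
     have h2 := α.blocks_sum
     have h3 := headI_pos hj α
     omega⟩

def consComp (j : ℕ) (p : Σ k : ℕ, Composition (j - 1 - k)) : Composition j :=
  if h : p.1 < j then
    ⟨(p.1 + 1) :: p.2.blocks,
     fun hx => by
       rcases List.mem_cons.mp hx with rfl | hx
       · omega
       · exact p.2.blocks_pos hx,
     by
       have := p.2.blocks_sum
       simp only [List.sum_cons]
       omega⟩
  else Composition.ones j

lemma eN_rec {j : ℕ} (hj : 1 ≤ j) :
    eN j = ∑ k ∈ Finset.range j, ((-1 : ℚ) ^ k) • (hW [k + 1] * eN (j - 1 - k)) := by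
  have hRHS : ∀ k ∈ Finset.range j, ((-1 : ℚ) ^ k) • (hW [k + 1] * eN (j - 1 - k))
      = ∑ α' : Composition (j - 1 - k),
          ((-1 : ℚ) ^ (k + ((j - 1 - k) - α'.length))) • hW ((k + 1) :: α'.blocks) := by
    intro k _
    rw [eN, Finset.mul_sum, Finset.smul_sum]
    apply Finset.sum_congr rfl
    intro α' _
    rw [mul_smul_comm, smul_smul, ← pow_add, ← hW_append]
    rfl
  rw [Finset.sum_congr rfl hRHS, Finset.sum_sigma', eN]
  apply Finset.sum_nbij'
    (i := fun α : Composition j =>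
      (⟨α.blocks.headI - 1, tlComp hj α⟩ : Σ k : ℕ, Composition (j - 1 - k)))
    (j := consComp j)
  · intro α _
    rw [Finset.mem_sigma]
    constructor
    · rw [Finset.mem_range]
      show α.blocks.headI - 1 < j
      have := headI_le hj α
      have := headI_pos hj α
      omega
    · exact Finset.mem_univ _
  · intro p _
    exact Finset.mem_univ _
  · intro α _
    have hh := headI_pos hj α
    have hlt : α.blocks.headI - 1 < j := by
      have := headI_le hj α
      omega
    apply Composition.ext
    show (consComp j ⟨α.blocks.headI - 1, tlComp hj α⟩).blocks = α.blocks
    rw [consComp, dif_pos hlt]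
    show (α.blocks.headI - 1 + 1) :: α.blocks.tail = α.blocks
    rw [show α.blocks.headI - 1 + 1 = α.blocks.headI from by omega]
    cases hb : α.blocks with
    | nil => exact absurd hb (blocks_ne_nil hj α)
    | cons b t => simp
  · rintro ⟨k, α'⟩ hp
    rw [Finset.mem_sigma, Finset.mem_range] at hp
    obtain ⟨hk, -⟩ := hp
    rw [consComp, dif_pos hk]
    apply Sigma.ext
    · show (k + 1) - 1 = k
      omega
    · apply heq_of_eq
      apply Composition.ext
      rfl
  · intro α _
    have hh := headI_pos hj α
    have hne := blocks_ne_nil hj α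
    have hcons : (α.blocks.headI - 1 + 1) :: α.blocks.tail = α.blocks := by
      rw [show α.blocks.headI - 1 + 1 = α.blocks.headI from by omega]
      cases hb : α.blocks with
      | nil => exact absurd hb hne
      | cons b t => simp
    have hlen : (tlComp hj α).length = α.length - 1 := by
      show α.blocks.tail.length = α.blocks.length - 1
      cases α.blocks with
      | nil => rfl
      | cons b t => simp
    have hlenpos : 1 ≤ α.length := by
      show 1 ≤ α.blocks.length
      cases hb : α.blocks with
      | nil => exact absurd hb hne
      | cons b t => simp
    have hlen2 := Composition.length_le (tlComp hj α)
    have hle := headI_le hj α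
    have hexp : j - α.length
        = (α.blocks.headI - 1) + ((j - 1 - (α.blocks.headI - 1)) - (tlComp hj α).length) := by
      omega
    show ((-1 : ℚ) ^ (j - α.length)) • hW α.blocks
      = ((-1 : ℚ) ^ ((α.blocks.headI - 1) + ((j - 1 - (α.blocks.headI - 1))
          - (tlComp hj α).length))) • hW ((α.blocks.headI - 1 + 1) :: (tlComp hj α).blocks)
    rw [← hexp]
    exact congrArg _ (congrArg hW hcons.symm)

end PerpAux
namespace PerpAux

open Finset

lemma mulE (g : NSymH) {j : ℕ} (hj : 1 ≤ j) :
    g * eN j = ∑ k ∈ Finset.range j, ((-1 : ℚ) ^ k) • ((g * hW [k + 1]) * eN (j - 1 - k)) := by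
  rw [eN_rec hj, Finset.mul_sum]
  apply Finset.sum_congr rfl
  intro k _
  rw [mul_smul_comm, mul_assoc]

lemma telescope {M : Type*} [AddCommGroup M] [Module ℚ M] (G : ℕ → M) {j : ℕ} (hj : 1 ≤ j) :
    (∑ k ∈ Finset.range j, ((-1 : ℚ) ^ k) • G k)
      + (∑ k ∈ Finset.range (j - 1), ((-1 : ℚ) ^ k) • G (k + 1)) = G 0 := by
  obtain ⟨n, rfl⟩ : ∃ n, j = n + 1 := ⟨j - 1, by omega⟩
  rw [Finset.sum_range_succ']
  simp only [Nat.add_sub_cancel, pow_zero, one_smul]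
  have h : ∀ k, ((-1 : ℚ) ^ (k + 1)) • G (k + 1) = -(((-1 : ℚ) ^ k) • G (k + 1)) := by
    intro k
    rw [pow_succ, mul_neg_one, neg_smul]
  rw [Finset.sum_congr rfl (fun k _ => h k), Finset.sum_neg_distrib]
  abel

lemma rowStep (U : ℕ → NSymH →ₗ[ℚ] NSymH)
    (hU : ∀ (k : ℕ) (a : NSymH) (m : ℕ) (γ : Composition m),
      pairPF (U k a) (Ffun γ) = pairPF a (Frow k * Ffun γ))
    (i k : ℕ) (hi : 1 ≤ i) (f : NSymH) :
    U i (f * hW [k + 1]) = U i f * hW [k + 1] + U (i - 1) (f * hW [k]) := by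
  rw [rowRule U hU i (k + 1) f, rowRule U hU (i - 1) k f]
  rw [show min i (k + 1) + 1 = (min (i - 1) k + 1) + 1 from by omega]
  rw [Finset.sum_range_succ', add_comm (U i f * hW [k + 1]) _]
  congr 1
  · apply Finset.sum_congr rfl
    intro t _
    have e1 : i - (t + 1) = i - 1 - t := by omega
    have e2 : k + 1 - (t + 1) = k - t := by omega
    rw [e1, e2]

lemma rowE (U : ℕ → NSymH →ₗ[ℚ] NSymH)
    (hU : ∀ (k : ℕ) (a : NSymH) (m : ℕ) (γ : Composition m),
      pairPF (U k a) (Ffun γ) = pairPF a (Frow k * Ffun γ)) :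
    ∀ j, 1 ≤ j → ∀ i, 1 ≤ i → ∀ f : NSymH,
      U i (f * eN j) = U i f * eN j + U (i - 1) f * eN (j - 1) := by
  intro j
  induction j using Nat.strong_induction_on with
  | _ j IH =>
  intro hj i hi f
  rw [mulE f hj, map_sum]
  simp only [map_smul]
  have hterm : ∀ k ∈ Finset.range j, U i ((f * hW [k + 1]) * eN (j - 1 - k))
      = (U i f * hW [k + 1]) * eN (j - 1 - k)
        + (U (i - 1) (f * hW [k])) * eN (j - 1 - k)
        + (if k + 1 < j then (U (i - 1) (f * hW [k + 1])) * eN (j - 1 - (k + 1)) else 0) := by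
    intro k hk
    rw [Finset.mem_range] at hk
    by_cases hlast : k + 1 < j
    · rw [IH (j - 1 - k) (by omega) (by omega) i hi (f * hW [k + 1]), if_pos hlast,
        rowStep U hU i k hi f, add_mul,
        show j - 1 - k - 1 = j - 1 - (k + 1) from by omega]
    · rw [if_neg hlast, add_zero, show j - 1 - k = 0 from by omega, eN_zero, mul_one,
        mul_one, mul_one, rowStep U hU i k hi f]
  rw [Finset.sum_congr rfl (fun k hk => congrArg (((-1 : ℚ) ^ k) • ·) (hterm k hk))]
  simp only [smul_add]
  rw [Finset.sum_add_distrib, Finset.sum_add_distrib]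
  have hS1 : ∑ k ∈ Finset.range j, ((-1 : ℚ) ^ k) • ((U i f * hW [k + 1]) * eN (j - 1 - k))
      = U i f * eN j := (mulE (U i f) hj).symm
  have hS3 : ∑ k ∈ Finset.range j, ((-1 : ℚ) ^ k) •
        (if k + 1 < j then (U (i - 1) (f * hW [k + 1])) * eN (j - 1 - (k + 1)) else 0)
      = ∑ k ∈ Finset.range (j - 1), ((-1 : ℚ) ^ k) •
        ((U (i - 1) (f * hW [k + 1])) * eN (j - 1 - (k + 1))) := by
    rw [← Finset.sum_subset (Finset.range_subset_range.mpr (show j - 1 ≤ j from by omega))]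
    · apply Finset.sum_congr rfl
      intro k hk
      rw [Finset.mem_range] at hk
      rw [if_pos (by omega)]
    · intro k hk hks
      rw [Finset.mem_range] at hk hks
      rw [if_neg (by omega), smul_zero]
  rw [hS1, hS3, add_assoc]
  congr 1
  have htel := telescope (M := NSymH)
    (fun k => (U (i - 1) (f * hW [k])) * eN (j - 1 - k)) hj
  simp only [hW_zero, mul_one, Nat.sub_zero] at htel
  exact htel

/-! ### triangular sum swap -/

lemma swapTri {M : Type*} [AddCommMonoid M] (X : ℕ → ℕ → M) (i j : ℕ) (hj : 1 ≤ j) :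
    ∑ k ∈ Finset.range j, ∑ t ∈ Finset.range (min i (j - 1 - k) + 1), X k t
    = ∑ t ∈ Finset.range (min i (j - 1) + 1), ∑ k ∈ Finset.range (j - t), X k t := by
  have h1 : ∀ k ∈ Finset.range j, ∑ t ∈ Finset.range (min i (j - 1 - k) + 1), X k t
      = ∑ t ∈ Finset.range (i + 1), if k + t ≤ j - 1 then X k t else 0 := by
    intro k hk
    rw [Finset.mem_range] at hk
    rw [← Finset.sum_subset (Finset.range_subset_range.mpr (show min i (j-1-k) + 1 ≤ i + 1 by omega))]
    · apply Finset.sum_congr rfl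
      intro t ht
      rw [Finset.mem_range] at ht
      rw [if_pos (by omega)]
    · intro t ht hts
      rw [Finset.mem_range] at ht hts
      rw [if_neg (by omega)]
  have h2 : ∀ t ∈ Finset.range (i + 1), ∑ k ∈ Finset.range (j - t), X k t
      = ∑ k ∈ Finset.range j, if k + t ≤ j - 1 then X k t else 0 := by
    intro t ht
    rw [Finset.mem_range] at ht
    rw [← Finset.sum_subset (Finset.range_subset_range.mpr (show j - t ≤ j by omega))]
    · apply Finset.sum_congr rfl
      intro k hkt
      rw [Finset.mem_range] at hkt
      rw [if_pos (by omega)]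
    · intro k hk hkt
      rw [Finset.mem_range] at hk hkt
      rw [if_neg (by omega)]
  rw [Finset.sum_congr rfl h1, Finset.sum_comm]
  rw [← Finset.sum_subset
    (Finset.range_subset_range.mpr (show min i (j - 1) + 1 ≤ i + 1 by omega))]
  · apply Finset.sum_congr rfl
    intro t ht
    rw [Finset.mem_range] at ht
    rw [h2 t (Finset.mem_range.mpr (by omega))]
  · intro t ht hts
    rw [Finset.mem_range] at ht hts
    apply Finset.sum_eq_zero
    intro k hk
    rw [Finset.mem_range] at hk
    rw [if_neg (by omega)]

lemma newton (n : ℕ) (hn : 1 ≤ n) :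
    ∑ k ∈ Finset.range n, ((-1 : ℚ) ^ k) • (hW [k] * eN (n - 1 - k))
      = if n = 1 then 1 else 0 := by
  obtain ⟨n', rfl⟩ : ∃ n', n = n' + 1 := ⟨n - 1, by omega⟩
  rw [Finset.sum_range_succ']
  simp only [Nat.add_sub_cancel, pow_zero, one_smul, Nat.sub_zero, hW_zero, one_mul]
  rcases Nat.eq_zero_or_pos n' with rfl | hn'
  · simp [eN_zero]
  · rw [if_neg (by omega)]
    have h : ∀ k, ((-1 : ℚ) ^ (k + 1)) • (hW [k + 1] * eN (n' - 1 - k))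
        = -(((-1 : ℚ) ^ k) • (hW [k + 1] * eN (n' - 1 - k))) := by
      intro k
      rw [pow_succ, mul_neg_one, neg_smul]
    have h2 : ∀ k ∈ Finset.range n', n' + 1 - 1 - (k + 1) = n' - 1 - k := by
      intro k _; omega
    calc (∑ k ∈ Finset.range n', ((-1:ℚ) ^ (k+1)) • (hW [k + 1] * eN (n' + 1 - 1 - (k+1))))
          + eN (n' + 1 - 1)
        = (∑ k ∈ Finset.range n', -(((-1:ℚ) ^ k) • (hW [k + 1] * eN (n' - 1 - k)))) + eN n' := by
          congr 1
          apply Finset.sum_congr rfl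
          intro k hk
          rw [h2 k hk, h k]
      _ = -(∑ k ∈ Finset.range n', ((-1:ℚ) ^ k) • (hW [k + 1] * eN (n' - 1 - k))) + eN n' := by
          rw [Finset.sum_neg_distrib]
      _ = 0 := by
          have := eN_rec hn'
          have h3 : ∑ k ∈ Finset.range n', ((-1:ℚ) ^ k) • (hW [k + 1] * eN (n' - 1 - k))
              = eN n' := by
            rw [← this]
          rw [h3]
          abel

end PerpAux
namespace PerpAux

open Finset

lemma colE (V : ℕ → NSymH →ₗ[ℚ] NSymH)
    (hV : ∀ (k : ℕ) (a : NSymH) (m : ℕ) (γ : Composition m),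
      pairPF (V k a) (Ffun γ) = pairPF a (Fcol k * Ffun γ)) :
    ∀ j, 1 ≤ j → ∀ i, 1 ≤ i → ∀ f : NSymH,
      V i (f * eN j) = ∑ t ∈ Finset.range (min i j + 1), V (i - t) f * eN (j - t) := by
  intro j
  induction j using Nat.strong_induction_on with
  | _ j IH =>
  intro hj i hi f
  rw [mulE f hj, map_sum]
  simp only [map_smul]
  have hterm : ∀ k ∈ Finset.range j, V i ((f * hW [k + 1]) * eN (j - 1 - k))
      = ∑ t ∈ Finset.range (min i (j - 1 - k) + 1),
          ((V (i - t) f * hW [k + 1]) * eN (j - 1 - k - t)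
            + (if t < i then (V (i - 1 - t) f * hW [k]) * eN (j - 1 - k - t) else 0)) := by
    intro k hk
    rw [Finset.mem_range] at hk
    have hVt : ∀ t, t ≤ i → V (i - t) (f * hW [k + 1])
        = V (i - t) f * hW [k + 1] + (if t < i then V (i - 1 - t) f * hW [k] else 0) := by
      intro t ht
      by_cases hti : t < i
      · rw [if_pos hti, colRule V hV (i - t) (k + 1) (by omega) (by omega) f]
        have e1 : i - t - 1 = i - 1 - t := by omega
        have e2 : k + 1 - 1 = k := by omega
        rw [e1, e2]
      · rw [if_neg hti, show i - t = 0 from by omega, colId V hV, colId V hV, add_zero]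
    have hexp : V i ((f * hW [k + 1]) * eN (j - 1 - k))
        = ∑ t ∈ Finset.range (min i (j - 1 - k) + 1),
            V (i - t) (f * hW [k + 1]) * eN (j - 1 - k - t) := by
      by_cases hlast : k + 1 < j
      · exact IH (j - 1 - k) (by omega) (by omega) i hi (f * hW [k + 1])
      · rw [show j - 1 - k = 0 from by omega]
        simp [eN_zero]
    rw [hexp]
    apply Finset.sum_congr rfl
    intro t ht
    rw [Finset.mem_range] at ht
    rw [hVt t (by omega), add_mul, ite_mul, zero_mul]
  rw [Finset.sum_congr rfl (fun k hk => congrArg (((-1 : ℚ) ^ k) • ·) (hterm k hk))]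
  simp only [Finset.smul_sum, smul_add]
  rw [Finset.sum_congr rfl (fun k _ => Finset.sum_add_distrib), Finset.sum_add_distrib]
  rw [swapTri (fun k t => ((-1 : ℚ) ^ k) • ((V (i - t) f * hW [k + 1]) * eN (j - 1 - k - t)))
      i j hj,
    swapTri (fun k t => ((-1 : ℚ) ^ k) •
      (if t < i then (V (i - 1 - t) f * hW [k]) * eN (j - 1 - k - t) else 0)) i j hj]
  have hSA : ∑ t ∈ Finset.range (min i (j - 1) + 1), ∑ k ∈ Finset.range (j - t),
        ((-1 : ℚ) ^ k) • ((V (i - t) f * hW [k + 1]) * eN (j - 1 - k - t))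
      = ∑ t ∈ Finset.range (min i (j - 1) + 1), V (i - t) f * eN (j - t) := by
    apply Finset.sum_congr rfl
    intro t ht
    rw [Finset.mem_range] at ht
    have hjt : 1 ≤ j - t := by omega
    rw [mulE (V (i - t) f) hjt]
    apply Finset.sum_congr rfl
    intro k hk
    rw [Finset.mem_range] at hk
    have e : j - 1 - k - t = j - t - 1 - k := by omega
    rw [e]
  have hSB : ∑ t ∈ Finset.range (min i (j - 1) + 1), ∑ k ∈ Finset.range (j - t),
        ((-1 : ℚ) ^ k) • (if t < i then (V (i - 1 - t) f * hW [k]) * eN (j - 1 - k - t) else 0)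
      = if j ≤ i then V (i - j) f else 0 := by
    have hin : ∀ t ∈ Finset.range (min i (j - 1) + 1),
        (∑ k ∈ Finset.range (j - t),
          ((-1 : ℚ) ^ k) • (if t < i then (V (i - 1 - t) f * hW [k]) * eN (j - 1 - k - t) else 0))
        = if t < i then (if j - t = 1 then V (i - 1 - t) f else 0) else 0 := by
      intro t ht
      rw [Finset.mem_range] at ht
      by_cases hti : t < i
      · rw [if_pos hti]
        have hstep : ∀ k ∈ Finset.range (j - t),
            ((-1 : ℚ) ^ k) • (if t < i then (V (i - 1 - t) f * hW [k]) * eN (j - 1 - k - t) else 0)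
            = V (i - 1 - t) f * (((-1 : ℚ) ^ k) • (hW [k] * eN ((j - t) - 1 - k))) := by
          intro k hk
          rw [Finset.mem_range] at hk
          rw [if_pos hti, mul_assoc, mul_smul_comm,
            show j - 1 - k - t = j - t - 1 - k from by omega]
        rw [Finset.sum_congr rfl hstep, ← Finset.mul_sum, newton (j - t) (by omega),
          mul_ite, mul_one, mul_zero]
      · rw [if_neg hti]
        apply Finset.sum_eq_zero
        intro k _
        rw [if_neg hti, smul_zero]
    rw [Finset.sum_congr rfl hin]
    by_cases hij : j ≤ i
    · rw [if_pos hij]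
      rw [Finset.sum_eq_single_of_mem (j - 1)
        (Finset.mem_range.mpr (by omega))]
      · rw [if_pos (by omega), if_pos (by omega), show i - 1 - (j - 1) = i - j from by omega]
      · intro t ht htne
        rw [Finset.mem_range] at ht
        by_cases hti : t < i
        · rw [if_pos hti, if_neg (by omega)]
        · rw [if_neg hti]
    · rw [if_neg hij]
      apply Finset.sum_eq_zero
      intro t ht
      rw [Finset.mem_range] at ht
      by_cases hti : t < i
      · rw [if_pos hti, if_neg (by omega)]
      · rw [if_neg hti]
  rw [hSA, hSB]
  by_cases hij : j ≤ i
  · rw [if_pos hij, show min i j = j from by omega, show min i (j - 1) = j - 1 from by omega,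
      show j - 1 + 1 = j from by omega, Finset.sum_range_succ,
      show j - j = 0 from by omega, eN_zero, mul_one]
  · rw [if_neg hij, add_zero, show min i j = i from by omega,
      show min i (j - 1) = i from by omega]

end PerpAux

/-- For `i, j > 0` and `f ∈ NSym`:
`F^⊥_{(i)}(f·e_j) = F^⊥_{(i)}(f)·e_j + F^⊥_{(i−1)}(f)·e_{j−1}` and
`F^⊥_{(1^i)}(f·e_j) = ∑_{k=0}^{min(i,j)} F^⊥_{(1^{i−k})}(f)·e_{j−k}`; in particular
`F^⊥_{(1^i)}(e_j) = e_{j−i}` if `i ≤ j` and `0` if `i > j`, while `F^⊥_{(i)}(e_j)` is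
`e_{j−1}` if `i = 1` and `0` if `i > 1`.  Here `U k` (resp. `V k`) denotes the adjoint
of multiplication by `F_{(k)}` (resp. `F_{(1^k)}`). -/
theorem perp_e_rules (i j : ℕ) (hi : 0 < i) (hj : 0 < j)
    (U V : ℕ → NSymH →ₗ[ℚ] NSymH)
    (hU : ∀ (k : ℕ) (a : NSymH) (m : ℕ) (γ : Composition m),
      pairPF (U k a) (Ffun γ) = pairPF a (Frow k * Ffun γ))
    (hV : ∀ (k : ℕ) (a : NSymH) (m : ℕ) (γ : Composition m),
      pairPF (V k a) (Ffun γ) = pairPF a (Fcol k * Ffun γ))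
    (f : NSymH) :
    (U i (f * eN j) = U i f * eN j + U (i - 1) f * eN (j - 1)) ∧
    (V i (f * eN j) = ∑ k ∈ Finset.range (min i j + 1), V (i - k) f * eN (j - k)) ∧
    (i ≤ j → V i (eN j) = eN (j - i)) ∧ (j < i → V i (eN j) = 0) ∧
    (i = 1 → U i (eN j) = eN (j - 1)) ∧ (1 < i → U i (eN j) = 0) := by
  classical
  refine ⟨?_, ?_, ?_, ?_, ?_, ?_⟩
  · exact PerpAux.rowE U hU j hj i hi f
  · exact PerpAux.colE V hV j hj i hi f
  · intro hij
    have h := PerpAux.colE V hV j hj i hi 1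
    rw [one_mul] at h
    rw [h, Finset.sum_eq_single_of_mem i (Finset.mem_range.mpr (by omega))]
    · rw [show i - i = 0 from by omega, PerpAux.colId V hV, one_mul]
    · intro t ht htne
      rw [Finset.mem_range] at ht
      rw [PerpAux.colUnit V hV (i - t) (by omega), zero_mul]
  · intro hij
    have h := PerpAux.colE V hV j hj i hi 1
    rw [one_mul] at h
    rw [h]
    apply Finset.sum_eq_zero
    intro t ht
    rw [Finset.mem_range] at ht
    rw [PerpAux.colUnit V hV (i - t) (by omega), zero_mul]
  · intro hi1
    subst hi1
    have h := PerpAux.rowE U hU j hj 1 le_rfl 1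
    rw [one_mul] at h
    rw [h, PerpAux.rowUnit U hU 1 le_rfl, zero_mul, zero_add,
      show (1 : ℕ) - 1 = 0 from rfl, PerpAux.rowId U hU, one_mul]
  · intro hi1
    have h := PerpAux.rowE U hU j hj i hi 1
    rw [one_mul] at h
    rw [h, PerpAux.rowUnit U hU i (by omega), PerpAux.rowUnit U hU (i - 1) (by omega),
      zero_mul, zero_mul, add_zero]
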